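/- arXiv:cs/0607055 — 4 statements merged into one kernel-verified Lean document; each statement's English description precedes it below -/
import Mathlib

section
/- Let G be a connected chordal graph and let S be a minimal vertex separator of G that is minimal in the set of all minimal vertex separators with respect to inclusion. Let Γ_1, ..., Γ_M be the connected components of G(V \ S). Then the set of maximal cliques of G is the disjoint union over m of the sets of maximal cliques of the induced subgraphs G(Γ_m ∪ S). -/
namespace Chordal

variable {V : Type*} [Fintype V]

/-- A closed walk has a chord: an edge of `G` joining two support vertices that is
not an edge of the walk. -/
def HasChord (G : SimpleGraph V) {u : V} (c : G.Walk u u) : Prop :=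
  ∃ v w, v ∈ c.support ∧ w ∈ c.support ∧ G.Adj v w ∧ s(v, w) ∉ c.edges

/-- A graph is chordal if every cycle of length at least 4 has a chord. -/
def IsChordal (G : SimpleGraph V) : Prop :=
  ∀ ⦃u : V⦄ (c : G.Walk u u), c.IsCycle → 4 ≤ c.length → HasChord G c

/-- A maximal clique of `G`. -/
def IsMaxClique (G : SimpleGraph V) (s : Set V) : Prop :=
  G.IsClique s ∧ ∀ t : Set V, G.IsClique t → s ⊆ t → s = t

/-- A maximal clique of the induced subgraph `G(W)`. -/
def IsMaxCliqueOn (G : SimpleGraph V) (W s : Set V) : Prop :=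
  s ⊆ W ∧ G.IsClique s ∧ ∀ t : Set V, t ⊆ W → G.IsClique t → s ⊆ t → s = t

/-- There is a walk from `u` to `w` staying inside `W` and avoiding `S`. -/
def ReachWithin (G : SimpleGraph V) (W S : Set V) (u w : V) : Prop :=
  ∃ p : G.Walk u w, ∀ x ∈ p.support, x ∈ W ∧ x ∉ S

/-- `S` separates `u` from `w` in the induced subgraph `G(W)`. -/
def SeparatesOn (G : SimpleGraph V) (W S : Set V) (u w : V) : Prop :=
  u ∈ W ∧ w ∈ W ∧ u ∉ S ∧ w ∉ S ∧ u ≠ w ∧ ¬ ReachWithin G W S u w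

/-- `S` is a minimal vertex separator of the induced subgraph `G(W)`:
for some pair `u, w` it is an inclusion-minimal set separating `u` from `w`. -/
def IsMinSeparatorOn (G : SimpleGraph V) (W S : Set V) : Prop :=
  S ⊆ W ∧ ∃ u w, SeparatesOn G W S u w ∧ ∀ S' ⊂ S, ¬ SeparatesOn G W S' u w

/-- `S` is a minimal vertex separator of `G`. -/
def IsMinSeparator (G : SimpleGraph V) (S : Set V) : Prop :=
  IsMinSeparatorOn G Set.univ S

/-- `S` is inclusion-minimal among the minimal vertex separators of `G`. -/
def IsInclMinSeparator (G : SimpleGraph V) (S : Set V) : Prop :=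
  IsMinSeparator G S ∧ ∀ S' : Set V, IsMinSeparator G S' → S' ⊆ S → S' = S

/-- `Γ` is a connected component of `G(V \ S)`. -/
def IsCompOutside (G : SimpleGraph V) (S Γ : Set V) : Prop :=
  ∃ u, u ∉ S ∧ Γ = {w | ReachWithin G Set.univ S u w}

/-- A vertex is simplicial if its neighborhood is a clique. -/
def IsSimplicial (G : SimpleGraph V) (v : V) : Prop :=
  G.IsClique (G.neighborSet v)

/-- The simplicial component of a clique `C`: the simplicial vertices of `G` in `C`. -/
def Simp (G : SimpleGraph V) (C : Set V) : Set V :=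
  {v ∈ C | IsSimplicial G v}

/-- The non-simplicial component of a clique `C`. -/
def Sep (G : SimpleGraph V) (C : Set V) : Set V :=
  C \ Simp G C

/-- `C` is a boundary clique (simply separated clique): a maximal clique such that
`Sep C = C ∩ C'` for some other maximal clique `C'`. -/
def IsBoundaryClique (G : SimpleGraph V) (C : Set V) : Prop :=
  IsMaxClique G C ∧ ∃ C' : Set V, IsMaxClique G C' ∧ C' ≠ C ∧ Sep G C = C ∩ C'

/-- The induced subgraph on `W`, kept on the same vertex type. -/
def restrictS (G : SimpleGraph V) (W : Set V) : SimpleGraph V where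
  Adj u v := G.Adj u v ∧ u ∈ W ∧ v ∈ W
  symm := ⟨fun u v ⟨h, hu, hv⟩ => ⟨h.symm, hv, hu⟩⟩
  loopless := ⟨fun u ⟨h, _, _⟩ => G.loopless.irrefl u h⟩

/-- The vertex subset `A` induces a connected subgraph of `T`. -/
def ConnOn {α : Type*} (T : SimpleGraph α) (A : Set α) : Prop :=
  A.Nonempty ∧ ∀ u ∈ A, ∀ v ∈ A, ∃ p : T.Walk u v, ∀ x ∈ p.support, x ∈ A

/-- The induced subgraph `G(W)` is complete. -/
def CompleteOn (G : SimpleGraph V) (W : Set V) : Prop :=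
  ∀ u ∈ W, ∀ v ∈ W, u ≠ v → G.Adj u v

/-- A clique tree of `G`: a tree on the maximal cliques of `G` satisfying the
junction property. -/
def IsCliqueTree (G : SimpleGraph V) (T : SimpleGraph {s : Set V // IsMaxClique G s}) : Prop :=
  T.IsTree ∧ ∀ (C₁ C₂ : {s : Set V // IsMaxClique G s}) (p : T.Walk C₁ C₂), p.IsPath →
    ∀ C₃ ∈ p.support, C₁.val ∩ C₂.val ⊆ C₃.val

/-- A leaf (endpoint) of a graph: a vertex with exactly one neighbor. -/
def IsLeaf {α : Type*} (T : SimpleGraph α) (a : α) : Prop :=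
  ∃! b, T.Adj a b

/-- The union of the cliques preceding position `k` in a sequence. -/
def prefUnion {K : ℕ} (f : Fin K → Set V) (k : Fin K) : Set V :=
  {v | ∃ j, j < k ∧ v ∈ f j}

/-- A perfect sequence of the maximal cliques of the induced subgraph `G(W)`:
an enumeration of the maximal cliques of `G(W)` with the running intersection property. -/
def IsPerfectSeqOn (G : SimpleGraph V) (W : Set V) {K : ℕ} (f : Fin K → Set V) : Prop :=
  Function.Injective f ∧ (∀ s : Set V, IsMaxCliqueOn G W s ↔ ∃ k, f k = s) ∧
  ∀ k : Fin K, 0 < (k : ℕ) →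
    G.IsClique (prefUnion f k ∩ f k) ∧ ∃ k' : Fin K, k' < k ∧ prefUnion f k ∩ f k ⊆ f k'

/-- A perfect sequence of the maximal cliques of `G`. -/
def IsPerfectSeq (G : SimpleGraph V) {K : ℕ} (f : Fin K → Set V) : Prop :=
  Function.Injective f ∧ (∀ s : Set V, IsMaxClique G s ↔ ∃ k, f k = s) ∧
  ∀ k : Fin K, 0 < (k : ℕ) →
    G.IsClique (prefUnion f k ∩ f k) ∧ ∃ k' : Fin K, k' < k ∧ prefUnion f k ∩ f k ⊆ f k'

/-- The closed neighborhood of a vertex. -/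
def closedNbhd (G : SimpleGraph V) (v : V) : Set V :=
  insert v (G.neighborSet v)



set_option linter.unusedSectionVars false
set_option maxHeartbeats 1600000

section Lemmas
open SimpleGraph Walk

variable {G : SimpleGraph V} {S Γ : Set V} {u v w : V}

lemma reach_refl (hu : u ∉ S) : ReachWithin G Set.univ S u u :=
  ⟨SimpleGraph.Walk.nil, by simp [hu]⟩

lemma reach_symm (h : ReachWithin G Set.univ S u w) : ReachWithin G Set.univ S w u := by
  obtain ⟨p, hp⟩ := h
  exact ⟨p.reverse, by simpa [SimpleGraph.Walk.support_reverse] using hp⟩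

lemma reach_trans (h : ReachWithin G Set.univ S u v) (h' : ReachWithin G Set.univ S v w) :
    ReachWithin G Set.univ S u w := by
  obtain ⟨p, hp⟩ := h
  obtain ⟨q, hq⟩ := h'
  refine ⟨p.append q, fun x hx => ?_⟩
  rcases (SimpleGraph.Walk.mem_support_append_iff _ _).1 hx with h1 | h1
  exacts [hp x h1, hq x h1]

lemma reach_start (h : ReachWithin G Set.univ S u w) : u ∉ S := by
  obtain ⟨p, hp⟩ := h
  exact (hp u p.start_mem_support).2

lemma reach_end (h : ReachWithin G Set.univ S u w) : w ∉ S := by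
  obtain ⟨p, hp⟩ := h
  exact (hp w p.end_mem_support).2

lemma reach_adj (h : ReachWithin G Set.univ S u v) (ha : G.Adj v w) (hw : w ∉ S) :
    ReachWithin G Set.univ S u w := by
  refine reach_trans h ⟨ha.toWalk, ?_⟩
  have hv : v ∉ S := reach_end h
  intro x hx
  simp only [SimpleGraph.Walk.support_cons, SimpleGraph.Walk.support_nil,
    List.mem_cons, List.mem_singleton, List.not_mem_nil, or_false] at hx
  rcases hx with rfl | rfl
  · exact ⟨trivial, hv⟩
  · exact ⟨trivial, hw⟩

/-- Extraction of an inclusion-minimal separating subset. -/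
lemma exists_minimal_sep (x y : V) :
    ∀ (A : Set V), SeparatesOn G Set.univ A x y →
      ∃ B ⊆ A, SeparatesOn G Set.univ B x y ∧ ∀ B' ⊂ B, ¬ SeparatesOn G Set.univ B' x y := by
  have : ∀ (n : ℕ) (A : Set V), A.ncard ≤ n → SeparatesOn G Set.univ A x y →
      ∃ B ⊆ A, SeparatesOn G Set.univ B x y ∧ ∀ B' ⊂ B, ¬ SeparatesOn G Set.univ B' x y := by
    intro n
    induction n with
    | zero =>
      intro A hA hsep
      refine ⟨A, subset_rfl, hsep, fun B' hB' hsep' => ?_⟩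
      have : A = ∅ := by
        have := Set.ncard_eq_zero (Set.toFinite A) |>.1 (Nat.le_zero.1 hA)
        exact this
      rw [this] at hB'
      exact absurd hB' (by simp [Set.ssubset_def])
    | succ n ih =>
      intro A hA hsep
      by_cases h : ∀ B' ⊂ A, ¬ SeparatesOn G Set.univ B' x y
      · exact ⟨A, subset_rfl, hsep, h⟩
      · push_neg at h
        obtain ⟨B', hB', hsep'⟩ := h
        have hcard : B'.ncard ≤ n := by
          have h1 : B'.ncard < A.ncard := Set.ncard_lt_ncard hB' (Set.toFinite A)
          omega
        obtain ⟨B, hBB, h1, h2⟩ := ih B' hcard hsep'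
        exact ⟨B, hBB.trans hB'.subset, h1, h2⟩
  exact fun A hsep => this A.ncard A le_rfl hsep


lemma edge_mem_of_length_one {u v : V} (r : G.Walk u v) (h : r.length = 1) :
    s(u, v) ∈ r.edges := by
  cases r with
  | nil => simp at h
  | cons h' r' =>
    have h0 : r'.length = 0 := by simpa using h
    have := r'.eq_of_length_eq_zero h0
    subst this
    simp

/-- Shortest-walk lemma: from a walk within `Γ` from a `Ps`-vertex to a `Pe`-vertex,
get one that is a path, meets `Ps`/`Pe` only at its endpoints and has no chords. -/
lemma exists_min_walk (Γ : Set V) (Ps Pe : V → Prop)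
    (hne : ∃ (x y : V) (p : G.Walk x y), Ps x ∧ Pe y ∧ ∀ v ∈ p.support, v ∈ Γ) :
    ∃ (x y : V) (p : G.Walk x y), Ps x ∧ Pe y ∧ (∀ v ∈ p.support, v ∈ Γ) ∧ p.IsPath ∧
      (∀ v ∈ p.support, Ps v → v = x) ∧ (∀ v ∈ p.support, Pe v → v = y) ∧
      (∀ a b, a ∈ p.support → b ∈ p.support → G.Adj a b → s(a, b) ∈ p.edges) := by
  classical
  set Q : ℕ → Prop := fun n =>
    ∃ (x y : V) (p : G.Walk x y), p.length = n ∧ Ps x ∧ Pe y ∧ ∀ v ∈ p.support, v ∈ Γ with hQdef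
  have hQ : ∃ n, Q n := by
    obtain ⟨x, y, p, h1, h2, h3⟩ := hne
    exact ⟨p.length, x, y, p, rfl, h1, h2, h3⟩
  let n := Nat.find hQ
  obtain ⟨x, y, p0, hlen, hx, hy, hΓ0⟩ : Q n := Nat.find_spec hQ
  set p := p0.bypass with hp
  have hsupp : ∀ v ∈ p.support, v ∈ Γ := fun v hv => hΓ0 v (p0.support_bypass_subset hv)
  have hplen : p.length = n := by
    have h1 : p.length ≤ n := hlen ▸ p0.length_bypass_le
    have h2 : n ≤ p.length := Nat.find_min' hQ ⟨x, y, p, rfl, hx, hy, hsupp⟩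
    omega
  -- minimality: no strictly shorter family member
  have hmin : ∀ (x' y' : V) (q : G.Walk x' y'), Ps x' → Pe y' → (∀ v ∈ q.support, v ∈ Γ) →
      p.length ≤ q.length := by
    intro x' y' q h1 h2 h3
    rw [hplen]
    by_contra hlt
    exact Nat.find_min hQ (by omega : q.length < n) ⟨x', y', q, rfl, h1, h2, h3⟩
  have hpath : p.IsPath := p0.bypass_isPath
  refine ⟨x, y, p, hx, hy, hsupp, hpath, ?_, ?_, ?_⟩
  · -- start uniqueness
    intro v hv hPv
    by_contra hne'
    have hq := p.dropUntil v hv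
    have hqΓ : ∀ z ∈ (p.dropUntil v hv).support, z ∈ Γ :=
      fun z hz => hsupp z (p.support_dropUntil_subset hv hz)
    have hle := hmin v y (p.dropUntil v hv) hPv hy hqΓ
    have hspec := congrArg Walk.length (p.take_spec hv)
    rw [length_append] at hspec
    have htake : (p.takeUntil v hv).length = 0 := by omega
    exact hne' ((p.takeUntil v hv).eq_of_length_eq_zero htake).symm
  · -- end uniqueness
    intro v hv hPv
    by_contra hne'
    have hqΓ : ∀ z ∈ (p.takeUntil v hv).support, z ∈ Γ :=
      fun z hz => hsupp z (p.support_takeUntil_subset hv hz)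
    have hle := hmin x v (p.takeUntil v hv) hx hPv hqΓ
    have hspec := congrArg Walk.length (p.take_spec hv)
    rw [length_append] at hspec
    have hdrop : (p.dropUntil v hv).length = 0 := by omega
    exact hne' ((p.dropUntil v hv).eq_of_length_eq_zero hdrop)
  · -- no chords
    intro a b ha hb hadj
    by_contra hchord
    set p1 := p.takeUntil a ha with hp1
    set p2 := p.dropUntil a ha with hp2
    have hspec := p.take_spec ha
    have hlen12 : p1.length + p2.length = p.length := by
      have := congrArg Walk.length hspec; rwa [length_append] at this
    have hb' : b ∈ p1.support ∨ b ∈ p2.support := by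
      rw [← mem_support_append_iff, hspec]; exact hb
    rcases hb' with hb1 | hb2
    · -- b occurs in the first part; shortcut b → a
      set q1 := p1.takeUntil b hb1 with hq1
      have hl1 : (p1.takeUntil b hb1).length + (p1.dropUntil b hb1).length = p1.length := by
        have := congrArg Walk.length (p1.take_spec hb1); rwa [length_append] at this
      have hdl : 2 ≤ (p1.dropUntil b hb1).length := by
        rcases Nat.lt_or_ge (p1.dropUntil b hb1).length 2 with h | h
        · interval_cases h' : (p1.dropUntil b hb1).length
          · exact absurd ((p1.dropUntil b hb1).eq_of_length_eq_zero h') hadj.ne'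
          · have := edge_mem_of_length_one _ h'
            have : s(b, a) ∈ p.edges := (p.edges_takeUntil_subset ha) (p1.edges_dropUntil_subset hb1 this)
            rw [Sym2.eq_swap] at this
            exact absurd this hchord
        · exact h
      set q : G.Walk x y := q1.append (Walk.cons hadj.symm p2) with hqdef
      have hqΓ : ∀ z ∈ q.support, z ∈ Γ := by
        intro z hz
        rw [hqdef, mem_support_append_iff] at hz
        rcases hz with hz | hz
        · exact hsupp z (p.support_takeUntil_subset ha (p1.support_takeUntil_subset hb1 hz))
        · rw [support_cons] at hz
          rcases List.mem_cons.1 hz with rfl | hz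
          · exact hsupp _ hb
          · exact hsupp z (p.support_dropUntil_subset ha hz)
      have hle := hmin x y q hx hy hqΓ
      have hql : q.length = q1.length + (p2.length + 1) := by
        rw [hqdef, length_append, length_cons]
      have hq1l : q1.length = (p1.takeUntil b hb1).length := rfl
      omega
    · -- b occurs in the second part; shortcut a → b
      set q2 := p2.dropUntil b hb2 with hq2
      have hl2 : (p2.takeUntil b hb2).length + (p2.dropUntil b hb2).length = p2.length := by
        have := congrArg Walk.length (p2.take_spec hb2); rwa [length_append] at this
      have htl : 2 ≤ (p2.takeUntil b hb2).length := by
        rcases Nat.lt_or_ge (p2.takeUntil b hb2).length 2 with h | h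
        · interval_cases h' : (p2.takeUntil b hb2).length
          · exact absurd ((p2.takeUntil b hb2).eq_of_length_eq_zero h') hadj.ne
          · have := edge_mem_of_length_one _ h'
            have : s(a, b) ∈ p.edges := (p.edges_dropUntil_subset ha) (p2.edges_takeUntil_subset hb2 this)
            exact absurd this hchord
        · exact h
      set q : G.Walk x y := p1.append (Walk.cons hadj q2) with hqdef
      have hqΓ : ∀ z ∈ q.support, z ∈ Γ := by
        intro z hz
        rw [hqdef, mem_support_append_iff] at hz
        rcases hz with hz | hz
        · exact hsupp z (p.support_takeUntil_subset ha hz)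
        · rw [support_cons] at hz
          rcases List.mem_cons.1 hz with rfl | hz
          · exact hsupp _ ha
          · exact hsupp z (p.support_dropUntil_subset ha (p2.support_dropUntil_subset hb2 hz))
      have hle := hmin x y q hx hy hqΓ
      have hql : q.length = p1.length + (q2.length + 1) := by
        rw [hqdef, length_append, length_cons]
      have hq2l : q2.length = (p2.dropUntil b hb2).length := rfl
      omega


/-- First vertex of a path satisfying a predicate, together with the prefix walk up to it. -/
lemma exists_prefix_first (P : V → Prop) :
    ∀ {a b : V} (p : G.Walk a b), p.IsPath → (∃ z ∈ p.support, P z) →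
    ∃ (z : V) (r : G.Walk a z), P z ∧ (∀ v ∈ r.support, P v → v = z) ∧
      (∀ v ∈ r.support, v ∈ p.support) ∧ (∀ e ∈ r.edges, e ∈ p.edges) ∧ r.IsPath ∧
      (∀ u v : V, s(u, v) ∈ p.edges → u ∈ r.support → v ∈ r.support → s(u, v) ∈ r.edges) := by
  intro a b p
  induction p with
  | nil =>
    intro _ hex
    obtain ⟨z, hz, hPz⟩ := hex
    simp only [support_nil, List.mem_singleton] at hz
    subst hz
    refine ⟨z, Walk.nil, hPz, ?_, ?_, ?_, ?_, ?_⟩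
    · intro v hv _; simpa using (by simpa using hv : v = z)
    · simp
    · simp
    · simp
    · simp
  | cons h q ih =>
    rename_i u c d
    intro hpath hex
    by_cases hPa : P u
    · refine ⟨u, Walk.nil, hPa, ?_, ?_, ?_, ?_, ?_⟩
      · intro v hv _; simpa using (by simpa using hv : v = u)
      · simp
      · simp
      · simp
      · intro a' b' he ha' hb'
        simp only [support_nil, List.mem_singleton] at ha' hb'
        subst ha'; subst hb'
        exact absurd ((Walk.cons h q).adj_of_mem_edges he) (G.loopless.irrefl _)
    · have hqpath : q.IsPath := hpath.of_cons
      have hanq : u ∉ q.support := ((Walk.cons_isPath_iff h q).1 hpath).2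
      have hex' : ∃ z ∈ q.support, P z := by
        obtain ⟨z, hz, hPz⟩ := hex
        rw [support_cons, List.mem_cons] at hz
        rcases hz with rfl | hz
        · exact absurd hPz hPa
        · exact ⟨z, hz, hPz⟩
      obtain ⟨z, r, hPz, huniq, hsub, hesub, hrpath, hrefl⟩ := ih hqpath hex'
      have haz : u ∉ r.support := fun hx => hanq (hsub u hx)
      refine ⟨z, Walk.cons h r, hPz, ?_, ?_, ?_, ?_, ?_⟩
      · intro v hv hPv
        rw [support_cons, List.mem_cons] at hv
        rcases hv with rfl | hv
        · exact absurd hPv hPa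
        · exact huniq v hv hPv
      · intro v hv
        rw [support_cons, List.mem_cons] at hv
        rw [support_cons, List.mem_cons]
        rcases hv with rfl | hv
        · exact Or.inl rfl
        · exact Or.inr (hsub v hv)
      · intro e he
        rw [edges_cons, List.mem_cons] at he ⊢
        rcases he with rfl | he
        · exact Or.inl rfl
        · exact Or.inr (hesub e he)
      · exact hrpath.cons haz
      · intro a' b' he ha' hb'
        rw [edges_cons, List.mem_cons] at he
        rw [support_cons, List.mem_cons] at ha' hb'
        rw [edges_cons, List.mem_cons]
        rcases he with he | he
        · exact Or.inl he
        · refine Or.inr (hrefl a' b' he ?_ ?_)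
          · rcases ha' with rfl | ha'
            · exact absurd (q.fst_mem_support_of_mem_edges he) hanq
            · exact ha'
          · rcases hb' with rfl | hb'
            · exact absurd (q.snd_mem_support_of_mem_edges he) hanq
            · exact hb'


/-- Key chordal lemma: if every vertex of a clique `C` has a neighbour in a connected
set `Γ` disjoint from `C`, then some vertex of `Γ` is adjacent to all of `C`. -/
lemma clique_ext (hch : IsChordal G) (Γ : Set V) (hΓne : Γ.Nonempty)
    (hconn : ∀ x ∈ Γ, ∀ y ∈ Γ, ∃ p : G.Walk x y, ∀ v ∈ p.support, v ∈ Γ) :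
    ∀ C : Finset V, G.IsClique ↑C → (∀ c ∈ C, c ∉ Γ) → (∀ c ∈ C, ∃ x ∈ Γ, G.Adj c x) →
      ∃ x ∈ Γ, ∀ c ∈ C, G.Adj x c := by
  classical
  intro C
  induction C using Finset.induction_on with
  | empty => exact fun _ _ _ => ⟨hΓne.choose, hΓne.choose_spec, by simp⟩
  | @insert sv C₀ hsv ih =>
    intro hC hdisj hfull
    have hC₀ : G.IsClique ↑C₀ := hC.subset (by simp [Finset.coe_insert, Set.subset_insert])
    obtain ⟨x0, hx0Γ, hx0⟩ := ih hC₀ (fun c hc => hdisj c (Finset.mem_insert_of_mem hc))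
      (fun c hc => hfull c (Finset.mem_insert_of_mem hc))
    by_contra hno
    push_neg at hno
    obtain ⟨y0, hy0Γ, hy0⟩ := hfull sv (Finset.mem_insert_self _ _)
    obtain ⟨p0, hp0⟩ := hconn x0 hx0Γ y0 hy0Γ
    obtain ⟨x, y, p, hPsx, hPey, hsupp, hpath, hsu, heu, hnc⟩ :=
      exists_min_walk Γ (fun v => v ∈ Γ ∧ ∀ t ∈ C₀, G.Adj v t) (fun v => G.Adj v sv)
        ⟨x0, y0, p0, ⟨hx0Γ, hx0⟩, hy0.symm, hp0⟩
    have hxΓ : x ∈ Γ := hPsx.1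
    have hxC0 : ∀ t ∈ C₀, G.Adj x t := hPsx.2
    have hsvΓ : sv ∉ Γ := hdisj sv (Finset.mem_insert_self _ _)
    have hxs : ¬ G.Adj x sv := by
      intro h
      obtain ⟨c, hc, hnadj⟩ := hno x hxΓ
      rcases Finset.mem_insert.1 hc with rfl | hc
      exacts [hnadj h, hnadj (hxC0 c hc)]
    cases p with
    | nil => exact hxs hPey
    | @cons _ w _ hxw q =>
      simp only [support_cons, List.mem_cons] at hsupp hsu heu
      have hqpath : q.IsPath := hpath.of_cons
      have hxnq : x ∉ q.support := ((Walk.cons_isPath_iff hxw q).1 hpath).2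
      have hwΓ : w ∈ Γ := hsupp w (Or.inr q.start_mem_support)
      have hwx : w ≠ x := fun h => hxnq (h ▸ q.start_mem_support)
      have ht : ∃ t ∈ C₀, ¬ G.Adj t w := by
        by_contra h
        push_neg at h
        exact hwx (hsu w (Or.inr q.start_mem_support) ⟨hwΓ, fun t htm => (h t htm).symm⟩)
      obtain ⟨t, htC0, htw⟩ := ht
      have htC : t ∈ insert sv C₀ := Finset.mem_insert_of_mem htC0
      have htΓ : t ∉ Γ := hdisj t htC
      have htx : G.Adj t x := (hxC0 t htC0).symm
      have htsv : t ≠ sv := fun h => hsv (h ▸ htC0)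
      have hts : G.Adj sv t := hC (Finset.mem_insert_self _ _) (by exact_mod_cast htC)
        (Ne.symm htsv)
      have hqΓ : ∀ v ∈ q.support, v ∈ Γ := fun v hv => hsupp v (Or.inr hv)
      have hyΓ : y ∈ Γ := hqΓ y q.end_mem_support
      have hyt : y ≠ t := fun h => htΓ (h ▸ hyΓ)
      have hysv : y ≠ sv := fun h => hsvΓ (h ▸ hyΓ)
      by_cases hcase : ∃ z0 ∈ q.support, G.Adj t z0
      · -- Case 1: t has a neighbour on q; short cycle t-x-...-z-t
        obtain ⟨z, r, hPz, huniq, hsub, hesub, hrpath, hrefl⟩ :=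
          exists_prefix_first (fun v => G.Adj t v) q hqpath hcase
        have hzw : z ≠ w := fun h => htw (h ▸ hPz)
        have hrΓ : ∀ v ∈ r.support, v ∈ Γ := fun v hv => hqΓ v (hsub v hv)
        have htnr : t ∉ r.support := fun h => htΓ (hrΓ t h)
        have hxnr : x ∉ r.support := fun h => hxnq (hsub x h)
        have hznr : z ∈ r.support := r.end_mem_support
        have hznΓ : z ∈ Γ := hrΓ z hznr
        have hrlen : 1 ≤ r.length := by
          rcases Nat.eq_zero_or_pos r.length with h | h
          · exact absurd (r.eq_of_length_eq_zero h).symm hzw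
          · exact h
        set cyc : G.Walk t t := Walk.cons htx (Walk.cons hxw (r.concat hPz.symm)) with hcyc
        have hcycsupp : cyc.support = t :: x :: (r.support ++ [t]) := by
          simp [hcyc, support_cons, support_concat, List.concat_eq_append]
        have hcycedges : cyc.edges = s(t, x) :: s(x, w) :: (r.edges ++ [s(z, t)]) := by
          simp [hcyc, edges_cons, edges_concat, List.concat_eq_append]
        have e1 : s(t, x) ∉ r.edges := fun h => htnr (r.fst_mem_support_of_mem_edges h)
        have e2 : s(x, w) ∉ r.edges := fun h => hxnr (r.fst_mem_support_of_mem_edges h)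
        have e3 : s(z, t) ∉ r.edges := fun h => htnr (r.snd_mem_support_of_mem_edges h)
        have d12 : s(t, x) ≠ s(x, w) := by
          intro h
          rcases Sym2.eq_iff.1 h with ⟨h1, h2⟩ | ⟨h1, h2⟩
          · exact htΓ (by rw [h1]; exact hxΓ)
          · exact htΓ (by rw [h1]; exact hwΓ)
        have d13 : s(t, x) ≠ s(z, t) := by
          intro h
          rcases Sym2.eq_iff.1 h with ⟨h1, h2⟩ | ⟨h1, h2⟩
          · exact htΓ (by rw [h1]; exact hznΓ)
          · exact hxnr (by rw [h2]; exact hznr)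
        have d23 : s(x, w) ≠ s(z, t) := by
          intro h
          rcases Sym2.eq_iff.1 h with ⟨h1, h2⟩ | ⟨h1, h2⟩
          · exact hxnr (by rw [h1]; exact hznr)
          · exact htΓ (by rw [← h1]; exact hxΓ)
        have hcyccyc : cyc.IsCycle := by
          rw [Walk.isCycle_def]
          refine ⟨?_, by simp [hcyc], ?_⟩
          · rw [Walk.isTrail_def, hcycedges]
            have hrn : r.edges.Nodup := hrpath.isTrail.edges_nodup
            refine List.nodup_cons.2 ⟨?_, List.nodup_cons.2 ⟨?_, ?_⟩⟩
            · intro hm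
              rcases List.mem_cons.1 hm with h | hm
              · exact d12 h
              rcases List.mem_append.1 hm with h | h
              · exact e1 h
              · exact d13 (List.mem_singleton.1 h)
            · intro hm
              rcases List.mem_append.1 hm with h | h
              · exact e2 h
              · exact d23 (List.mem_singleton.1 h)
            · rw [List.nodup_append]
              exact ⟨hrn, List.nodup_singleton _, by
                intro e he
                simp only [List.mem_singleton]
                intro b hb h; rw [hb] at h; exact e3 (h ▸ he)⟩
          · rw [hcycsupp]
            simp only [List.tail_cons]
            refine List.nodup_cons.2 ⟨?_, ?_⟩
            · intro hm
              rcases List.mem_append.1 hm with h | h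
              · exact hxnr h
              · exact htΓ ((List.mem_singleton.1 h) ▸ hxΓ)
            · rw [List.nodup_append]
              exact ⟨hrpath.support_nodup, List.nodup_singleton _, by
                intro v hv
                simp only [List.mem_singleton]
                intro b hb h; rw [hb] at h; exact htΓ (hrΓ t (h ▸ hv))⟩
        have hcyclen : 4 ≤ cyc.length := by
          have hl : cyc.length = r.length + 3 := by
            simp [hcyc, Walk.length_cons, Walk.length_concat]
          omega
        obtain ⟨a, b, hac, hbc, hab, hnab⟩ := hch cyc hcyccyc hcyclen
        apply hnab
        rw [hcycedges]
        simp only [List.mem_cons, List.mem_append, List.mem_singleton]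
        have hmem : ∀ v, v ∈ cyc.support → v = t ∨ v = x ∨ v ∈ r.support := by
          intro v hv
          rw [hcycsupp] at hv
          simp only [List.mem_cons, List.mem_append, List.mem_singleton] at hv
          tauto
        have key : ∀ a b : V, (a = t ∨ a = x ∨ a ∈ r.support) →
            (b = t ∨ b = x ∨ b ∈ r.support) → G.Adj a b →
            s(a, b) = s(t, x) ∨ s(a, b) = s(x, w) ∨ s(a, b) ∈ r.edges ∨ s(a, b) = s(z, t) := by
          clear hab hac hbc hnab
          intro a b ha hb hab
          rcases ha with ha | ha | ha
          · rcases hb with hb | hb | hb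
            · exact absurd (by rw [ha, hb] at hab; exact hab) (G.irrefl)
            · left; rw [ha, hb]
            · have hbz : b = z := huniq b hb (by rw [ha] at hab; exact hab)
              right; right; right; rw [ha, hbz, Sym2.eq_swap]
          · rcases hb with hb | hb | hb
            · left; rw [ha, hb, Sym2.eq_swap]
            · exact absurd (by rw [ha, hb] at hab; exact hab) (G.irrefl)
            · have hbq : b ∈ q.support := hsub b hb
              have hxb : s(x, b) ∈ (Walk.cons hxw q).edges :=
                hnc x b (by simp [support_cons]) (by simp [support_cons, hbq])
                  (by rw [ha] at hab; exact hab)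
              rw [edges_cons, List.mem_cons] at hxb
              rcases hxb with h | h
              · rcases Sym2.eq_iff.1 h with ⟨h1, h2⟩ | ⟨h1, h2⟩
                · right; left; rw [ha, h2]
                · exact absurd (h2 ▸ hb) hxnr
              · exact absurd (q.fst_mem_support_of_mem_edges h) hxnq
          · rcases hb with hb | hb | hb
            · have haz : a = z := huniq a ha (by rw [hb] at hab; exact hab.symm)
              right; right; right; rw [haz, hb]
            · have haq : a ∈ q.support := hsub a ha
              have hxa : s(x, a) ∈ (Walk.cons hxw q).edges :=
                hnc x a (by simp [support_cons]) (by simp [support_cons, haq])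
                  (by rw [hb] at hab; exact hab.symm)
              rw [edges_cons, List.mem_cons] at hxa
              rcases hxa with h | h
              · rcases Sym2.eq_iff.1 h with ⟨h1, h2⟩ | ⟨h1, h2⟩
                · right; left; rw [hb, h2, Sym2.eq_swap]
                · exact absurd (h2 ▸ ha) hxnr
              · exact absurd (q.fst_mem_support_of_mem_edges h) hxnq
            · have hedge : s(a, b) ∈ (Walk.cons hxw q).edges :=
                hnc a b (by simp [support_cons, hsub a ha]) (by simp [support_cons, hsub b hb]) hab
              rw [edges_cons, List.mem_cons] at hedge
              rcases hedge with h | h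
              · rcases Sym2.eq_iff.1 h with ⟨h1, h2⟩ | ⟨h1, h2⟩
                · exact absurd (h1 ▸ ha) hxnr
                · exact absurd (h2 ▸ hb) hxnr
              · exact Or.inr (Or.inr (Or.inl (hrefl a b h ha hb)))
        have hk := key a b (hmem a hac) (hmem b hbc) hab
        tauto
      · -- Case 2: t has no neighbour on q; long cycle through sv
        push_neg at hcase
        set P : G.Walk x y := Walk.cons hxw q with hP
        set cyc : G.Walk t t := Walk.cons htx ((P.concat hPey).concat hts) with hcyc
        have hPsupp : ∀ v ∈ P.support, v ∈ Γ := by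
          intro v hv
          rw [hP, support_cons, List.mem_cons] at hv
          rcases hv with rfl | hv
          exacts [hxΓ, hqΓ v hv]
        have htnP : t ∉ P.support := fun h => htΓ (hPsupp t h)
        have hsvnP : sv ∉ P.support := fun h => hsvΓ (hPsupp sv h)
        have hcycsupp : cyc.support = t :: ((P.support ++ [sv]) ++ [t]) := by
          simp [hcyc, support_cons, support_concat, List.concat_eq_append]
        have hcycedges : cyc.edges = s(t, x) :: ((P.edges ++ [s(y, sv)]) ++ [s(sv, t)]) := by
          simp [hcyc, edges_cons, edges_concat, List.concat_eq_append]
        have hPedgemem : ∀ a b : V, s(a, b) ∈ P.edges → a ∈ P.support ∧ b ∈ P.support :=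
          fun a b h => ⟨P.fst_mem_support_of_mem_edges h, P.snd_mem_support_of_mem_edges h⟩
        have e1 : s(t, x) ∉ P.edges := fun h => htnP (hPedgemem t x h).1
        have e2 : s(y, sv) ∉ P.edges := fun h => hsvnP (hPedgemem y sv h).2
        have e3 : s(sv, t) ∉ P.edges := fun h => hsvnP (hPedgemem sv t h).1
        have d12 : s(t, x) ≠ s(y, sv) := by
          intro h
          rcases Sym2.eq_iff.1 h with ⟨h1, h2⟩ | ⟨h1, h2⟩
          · exact htΓ (by rw [h1]; exact hyΓ)
          · exact htsv h1
        have d13 : s(t, x) ≠ s(sv, t) := by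
          intro h
          rcases Sym2.eq_iff.1 h with ⟨h1, h2⟩ | ⟨h1, h2⟩
          · exact htsv h1
          · exact hsvΓ (by rw [← h2]; exact hxΓ)
        have d23 : s(y, sv) ≠ s(sv, t) := by
          intro h
          rcases Sym2.eq_iff.1 h with ⟨h1, h2⟩ | ⟨h1, h2⟩
          · exact htsv h2.symm
          · exact hyt h1
        have hcyccyc : cyc.IsCycle := by
          rw [Walk.isCycle_def]
          refine ⟨?_, by simp [hcyc], ?_⟩
          · rw [Walk.isTrail_def, hcycedges]
            refine List.nodup_cons.2 ⟨?_, ?_⟩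
            · intro hm
              rcases List.mem_append.1 hm with hm | h
              · rcases List.mem_append.1 hm with h | h
                · exact e1 h
                · exact d12 (List.mem_singleton.1 h)
              · exact d13 (List.mem_singleton.1 h)
            · rw [List.nodup_append, List.nodup_append]
              refine ⟨⟨hpath.isTrail.edges_nodup, List.nodup_singleton _, ?_⟩,
                List.nodup_singleton _, ?_⟩
              · intro e he
                simp only [List.mem_singleton]
                intro b hb h; rw [hb] at h; exact e2 (h ▸ he)
              · intro e he
                simp only [List.mem_singleton]
                intro b hb h; rw [hb] at h
                rw [List.mem_append, List.mem_singleton] at he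
                rcases he with he | he
                · exact e3 (h ▸ he)
                · exact d23 (by rw [← he, h])
          · rw [hcycsupp]
            simp only [List.tail_cons]
            rw [List.nodup_append, List.nodup_append]
            refine ⟨⟨hpath.support_nodup, List.nodup_singleton _, ?_⟩,
              List.nodup_singleton _, ?_⟩
            · intro v hv
              simp only [List.mem_singleton]
              intro b hb h; rw [hb] at h; exact hsvnP (h ▸ hv)
            · intro v hv
              simp only [List.mem_singleton]
              intro b hb h; rw [hb] at h
              rw [List.mem_append, List.mem_singleton] at hv
              rcases hv with hv | hv
              · exact htnP (h ▸ hv)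
              · exact htsv (by rw [← h, hv])
        have hcyclen : 4 ≤ cyc.length := by
          have h1 : 1 ≤ P.length := by simp [hP, Walk.length_cons]
          have hl : cyc.length = P.length + 3 := by
            simp [hcyc, Walk.length_cons, Walk.length_concat]
          omega
        obtain ⟨a, b, hac, hbc, hab, hnab⟩ := hch cyc hcyccyc hcyclen
        apply hnab
        rw [hcycedges]
        simp only [List.mem_cons, List.mem_append, List.mem_singleton]
        have hmem : ∀ v, v ∈ cyc.support → v = t ∨ v = sv ∨ v ∈ P.support := by
          intro v hv
          rw [hcycsupp] at hv
          simp only [List.mem_cons, List.mem_append, List.mem_singleton] at hv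
          tauto
        have hPx : ∀ v, v ∈ P.support → v = x ∨ v ∈ q.support := by
          intro v hv
          rw [hP, support_cons, List.mem_cons] at hv
          exact hv
        have key : ∀ a b : V, (a = t ∨ a = sv ∨ a ∈ P.support) →
            (b = t ∨ b = sv ∨ b ∈ P.support) → G.Adj a b →
            s(a, b) = s(t, x) ∨ (s(a, b) ∈ P.edges ∨ s(a, b) = s(y, sv)) ∨ s(a, b) = s(sv, t) := by
          clear hab hac hbc hnab
          intro a b ha hb hab
          rcases ha with ha | ha | ha
          · rcases hb with hb | hb | hb
            · exact absurd (by rw [ha, hb] at hab; exact hab) (G.irrefl)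
            · right; right; rw [ha, hb, Sym2.eq_swap]
            · rcases hPx b hb with hbx | hbq
              · left; rw [ha, hbx]
              · exact absurd (by rw [ha] at hab; exact hab) (hcase b hbq)
          · rcases hb with hb | hb | hb
            · right; right; rw [ha, hb]
            · exact absurd (by rw [ha, hb] at hab; exact hab) (G.irrefl)
            · have hby : b = y := heu b (hPx b hb) (by rw [ha] at hab; exact hab.symm)
              right; left; right; rw [ha, hby, Sym2.eq_swap]
          · rcases hb with hb | hb | hb
            · rcases hPx a ha with hax | haq
              · left; rw [hax, hb, Sym2.eq_swap]
              · exact absurd (by rw [hb] at hab; exact hab.symm) (hcase a haq)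
            · have hay : a = y := heu a (hPx a ha) (by rw [hb] at hab; exact hab)
              right; left; right; rw [hay, hb]
            · exact Or.inr (Or.inl (Or.inl (hnc a b ha hb hab)))
        have hk := key a b (hmem a hac) (hmem b hbc) hab
        tauto


lemma comp_nonS (hΓ : IsCompOutside G S Γ) : ∀ v ∈ Γ, v ∉ S := by
  obtain ⟨a, ha, rfl⟩ := hΓ
  exact fun v hv => reach_end hv

lemma comp_mem_of_reach (hΓ : IsCompOutside G S Γ) (hv : v ∈ Γ)
    (h : ReachWithin G Set.univ S v w) : w ∈ Γ := by
  obtain ⟨a, ha, rfl⟩ := hΓ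
  exact reach_trans hv h

lemma comp_adj_closed (hΓ : IsCompOutside G S Γ) (hv : v ∈ Γ) (ha : G.Adj v w) (hw : w ∉ S) :
    w ∈ Γ :=
  comp_mem_of_reach hΓ hv (reach_adj (reach_refl (comp_nonS hΓ v hv)) ha hw)

lemma comp_nonempty (hΓ : IsCompOutside G S Γ) : Γ.Nonempty := by
  obtain ⟨a, ha, rfl⟩ := hΓ
  exact ⟨a, reach_refl ha⟩

lemma comp_conn (hΓ : IsCompOutside G S Γ) :
    ∀ x ∈ Γ, ∀ y ∈ Γ, ∃ p : G.Walk x y, ∀ z ∈ p.support, z ∈ Γ := by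
  classical
  obtain ⟨a, ha, rfl⟩ := hΓ
  intro x hx y hy
  obtain ⟨p1, hp1⟩ := hx
  obtain ⟨p2, hp2⟩ := hy
  refine ⟨p1.reverse.append p2, fun z hz => ?_⟩
  rw [Walk.mem_support_append_iff, Walk.support_reverse, List.mem_reverse] at hz
  rcases hz with hz | hz
  · exact ⟨p1.takeUntil z hz, fun b hb => hp1 b (p1.support_takeUntil_subset hz hb)⟩
  · exact ⟨p2.takeUntil z hz, fun b hb => hp2 b (p2.support_takeUntil_subset hz hb)⟩

lemma comp_eq_of_mem {Γ' : Set V} (hΓ : IsCompOutside G S Γ) (hΓ' : IsCompOutside G S Γ')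
    (h1 : v ∈ Γ) (h2 : v ∈ Γ') : Γ = Γ' := by
  obtain ⟨a, ha, rfl⟩ := hΓ
  obtain ⟨b, hb, rfl⟩ := hΓ'
  ext z
  exact ⟨fun hz => reach_trans (reach_trans h2 (reach_symm h1)) hz,
    fun hz => reach_trans (reach_trans h1 (reach_symm h2)) hz⟩

/-- Every component of `G − S` is full when `S` is an inclusion-minimal minimal separator. -/
lemma comp_full (hS : IsInclMinSeparator G S) (hΓ : IsCompOutside G S Γ) :
    ∀ s ∈ S, ∃ x ∈ Γ, G.Adj s x := by
  intro s hsS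
  by_contra hfull
  push_neg at hfull
  obtain ⟨a, haS, rfl⟩ := hΓ
  set Γ : Set V := {w | ReachWithin G Set.univ S a w} with hΓdef
  have hΓ : IsCompOutside G S Γ := ⟨a, haS, rfl⟩
  have haΓ : a ∈ Γ := reach_refl haS
  set N : Set V := {v ∈ S | ∃ x ∈ Γ, G.Adj v x} with hN
  have hNS : N ⊆ S := fun v hv => hv.1
  have hsN : s ∉ N := fun h => by
    obtain ⟨x, hx, hadj⟩ := h.2
    exact hfull x hx hadj
  obtain ⟨-, u, w, husep, -⟩ := hS.1
  -- walks avoiding N starting in Γ stay in Γ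
  have hstays : ∀ (a b : V) (p : G.Walk a b), a ∈ Γ → (∀ z ∈ p.support, z ∉ N) → b ∈ Γ := by
    intro a b p
    induction p with
    | nil => exact fun h _ => h
    | cons hadj q ih =>
      rename_i a' c' b'
      intro ha hz
      have hc' : c' ∉ N := hz c' (by simp [Walk.support_cons])
      have hcS : c' ∉ S := by
        intro hcS
        exact hc' ⟨hcS, a', ha, hadj.symm⟩
      exact ih (comp_adj_closed hΓ ha hadj hcS) fun z hzm => hz z (by simp [Walk.support_cons, hzm])
  have hnotboth : ¬ (u ∈ Γ ∧ w ∈ Γ) := by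
    rintro ⟨hu, hw⟩
    exact husep.2.2.2.2.2 (reach_trans (reach_symm hu) hw)
  have hy : ∃ y, y ∉ Γ ∧ y ∉ S ∧ ¬ ReachWithin G Set.univ S u w := by
    by_cases huΓ : u ∈ Γ
    · exact ⟨w, fun h => hnotboth ⟨huΓ, h⟩, husep.2.2.2.1, husep.2.2.2.2.2⟩
    · exact ⟨u, huΓ, husep.2.2.1, husep.2.2.2.2.2⟩
  obtain ⟨y, hyΓ, hyS, -⟩ := hy
  have hsepN : SeparatesOn G Set.univ N a y := by
    refine ⟨trivial, trivial, fun h => haS (hNS h), fun h => hyS (hNS h),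
      fun h => hyΓ (h ▸ haΓ), ?_⟩
    rintro ⟨p, hp⟩
    exact hyΓ (hstays a y p haΓ (fun z hz => (hp z hz).2))
  obtain ⟨B, hBN, hBsep, hBmin⟩ := exists_minimal_sep a y N hsepN
  have hBminsep : IsMinSeparator G B := ⟨Set.subset_univ B, a, y, hBsep, hBmin⟩
  have hBS := hS.2 B hBminsep (hBN.trans hNS)
  exact hsN (hBN (hBS.symm ▸ hsS))

lemma clique_ext_set (hch : IsChordal G) (Γ : Set V) (hΓne : Γ.Nonempty)
    (hconn : ∀ x ∈ Γ, ∀ y ∈ Γ, ∃ p : G.Walk x y, ∀ v ∈ p.support, v ∈ Γ)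
    (C : Set V) (hC : G.IsClique C) (hdisj : ∀ c ∈ C, c ∉ Γ)
    (hfull : ∀ c ∈ C, ∃ x ∈ Γ, G.Adj c x) : ∃ x ∈ Γ, ∀ c ∈ C, G.Adj x c := by
  classical
  obtain ⟨x, hx, h⟩ := clique_ext hch Γ hΓne hconn (Set.toFinite C).toFinset
    (by rwa [Set.Finite.coe_toFinset])
    (fun c hc => hdisj c ((Set.Finite.mem_toFinset _).1 hc))
    (fun c hc => hfull c ((Set.Finite.mem_toFinset _).1 hc))
  exact ⟨x, hx, fun c hc => h c ((Set.Finite.mem_toFinset _).2 hc)⟩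

end Lemmas

theorem maxcliques_disjoint_union_over_components {V : Type*} [Fintype V]
    (G : SimpleGraph V) (hconn : G.Connected) (hch : IsChordal G)
    (S : Set V) (hS : IsInclMinSeparator G S) :
    (∀ C : Set V, IsMaxClique G C ↔
      ∃ Γ : Set V, IsCompOutside G S Γ ∧ IsMaxCliqueOn G (Γ ∪ S) C) ∧
    (∀ (C Γ Γ' : Set V), IsCompOutside G S Γ → IsCompOutside G S Γ' →
      IsMaxCliqueOn G (Γ ∪ S) C → IsMaxCliqueOn G (Γ' ∪ S) C → Γ = Γ') := by
  classical
  obtain ⟨u, w, husep, -⟩ := hS.1.2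
  -- a maximal clique on Γ ∪ S cannot be contained in S
  have hCSfalse : ∀ (C Γ : Set V), IsCompOutside G S Γ → IsMaxCliqueOn G (Γ ∪ S) C →
      C ⊆ S → False := by
    intro C Γ hΓ hmax hCS
    have hdisj : ∀ c ∈ C, c ∉ Γ := fun c hc hcΓ => (comp_nonS hΓ c hcΓ) (hCS hc)
    have hfullC : ∀ c ∈ C, ∃ x ∈ Γ, G.Adj c x :=
      fun c hc => comp_full hS hΓ c (hCS hc)
    obtain ⟨x, hxΓ, hx⟩ := clique_ext_set hch Γ (comp_nonempty hΓ) (comp_conn hΓ)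
      C hmax.2.1 hdisj hfullC
    have hins : G.IsClique (insert x C) := hmax.2.1.insert (fun b hb _ => hx b hb)
    have hsubW : insert x C ⊆ Γ ∪ S := by
      intro z hz
      rcases Set.mem_insert_iff.1 hz with rfl | hz
      · exact Or.inl hxΓ
      · exact Or.inr (hCS hz)
    have heq : C = insert x C := hmax.2.2 (insert x C) hsubW hins (Set.subset_insert x C)
    exact (comp_nonS hΓ x hxΓ) (hCS (heq ▸ Set.mem_insert x C))
  constructor
  · intro C
    constructor
    · intro hmc
      by_cases hCS : C ⊆ S
      · exact ⟨{v | ReachWithin G Set.univ S u v}, ⟨u, husep.2.2.1, rfl⟩,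
          hCS.trans Set.subset_union_right, hmc.1, fun t _ ht hsub => hmc.2 t ht hsub⟩
      · obtain ⟨c, hcC, hcS⟩ := Set.not_subset.1 hCS
        refine ⟨{v | ReachWithin G Set.univ S c v}, ⟨c, hcS, rfl⟩, ?_, hmc.1,
          fun t _ ht hsub => hmc.2 t ht hsub⟩
        intro c' hc'
        by_cases h' : c' ∈ S
        · exact Or.inr h'
        · left
          by_cases hcc : c' = c
          · rw [hcc]; exact reach_refl hcS
          · exact reach_adj (reach_refl hcS) (hmc.1 hcC hc' (fun h => hcc h.symm)) h'
    · rintro ⟨Γ, hΓ, hmax⟩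
      refine ⟨hmax.2.1, fun t ht hsub => ?_⟩
      refine hmax.2.2 t ?_ ht hsub
      by_cases hCS : C ⊆ S
      · exact (hCSfalse C Γ hΓ hmax hCS).elim
      · obtain ⟨c, hcC, hcS⟩ := Set.not_subset.1 hCS
        have hcΓ : c ∈ Γ := (hmax.1 hcC).resolve_right hcS
        intro z hz
        by_cases hzS : z ∈ S
        · exact Or.inr hzS
        · left
          by_cases hzc : z = c
          · rw [hzc]; exact hcΓ
          · exact comp_adj_closed hΓ hcΓ (ht (hsub hcC) hz (fun h => hzc h.symm)) hzS
  · intro C Γ Γ' hΓ hΓ' hm hm'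
    by_cases hCS : C ⊆ S
    · exact (hCSfalse C Γ hΓ hm hCS).elim
    · obtain ⟨c, hcC, hcS⟩ := Set.not_subset.1 hCS
      have h1 : c ∈ Γ := (hm.1 hcC).resolve_right hcS
      have h2 : c ∈ Γ' := (hm'.1 hcC).resolve_right hcS
      exact comp_eq_of_mem hΓ hΓ' h1 h2

end Chordal
end

section
/- Let G be a connected chordal graph and S a minimal vertex separator. If the induced subgraph on the union of the maximal cliques containing S has at least two minimal vertex separators, then S is properly contained in every minimal vertex separator S' ≠ S of that induced subgraph. -/
namespace Chordal

variable {V : Type*} [Fintype V]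

theorem separator_ssubset_of_two_separators {V : Type*} [Fintype V]
    (G : SimpleGraph V) (hconn : G.Connected) (hch : IsChordal G)
    (S : Set V) (hS : IsMinSeparator G S) (W : Set V)
    (hW : W = {v | ∃ C : Set V, IsMaxClique G C ∧ S ⊂ C ∧ v ∈ C})
    (h2 : ∃ S₁ S₂ : Set V, S₁ ≠ S₂ ∧ IsMinSeparatorOn G W S₁ ∧ IsMinSeparatorOn G W S₂) :
    ∀ S' : Set V, IsMinSeparatorOn G W S' → S' ≠ S → S ⊂ S' := by
  intro S' hS' hne
  obtain ⟨hS'W, u, w, ⟨huW, hwW, huS', hwS', huw, hnr⟩, -⟩ := hS'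
  refine HasSubset.Subset.ssubset_of_ne ?_ (Ne.symm hne)
  intro s hs
  by_contra hsS'
  apply hnr
  subst hW
  obtain ⟨Cu, hCu, hSCu, huCu⟩ := huW
  obtain ⟨Cw, hCw, hSCw, hwCw⟩ := hwW
  have hsW : s ∈ {v | ∃ C : Set V, IsMaxClique G C ∧ S ⊂ C ∧ v ∈ C} :=
    ⟨Cu, hCu, hSCu, hSCu.1 hs⟩
  have huW' : u ∈ {v | ∃ C : Set V, IsMaxClique G C ∧ S ⊂ C ∧ v ∈ C} :=
    ⟨Cu, hCu, hSCu, huCu⟩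
  have hwW' : w ∈ {v | ∃ C : Set V, IsMaxClique G C ∧ S ⊂ C ∧ v ∈ C} :=
    ⟨Cw, hCw, hSCw, hwCw⟩
  by_cases hus : u = s
  · have hadj : G.Adj u w := hCw.1 (hSCw.1 (hus ▸ hs)) hwCw huw
    refine ⟨hadj.toWalk, ?_⟩
    intro x hx
    simp only [SimpleGraph.Adj.toWalk, SimpleGraph.Walk.support_cons,
      SimpleGraph.Walk.support_nil, List.mem_cons, List.mem_singleton,
      List.not_mem_nil, or_false] at hx
    rcases hx with rfl | rfl
    · exact ⟨huW', huS'⟩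
    · exact ⟨hwW', hwS'⟩
  · by_cases hws : w = s
    · have hadj : G.Adj u w := hCu.1 huCu (hSCu.1 (hws ▸ hs)) huw
      refine ⟨hadj.toWalk, ?_⟩
      intro x hx
      simp only [SimpleGraph.Adj.toWalk, SimpleGraph.Walk.support_cons,
        SimpleGraph.Walk.support_nil, List.mem_cons, List.mem_singleton,
        List.not_mem_nil, or_false] at hx
      rcases hx with rfl | rfl
      · exact ⟨huW', huS'⟩
      · exact ⟨hwW', hwS'⟩
    · have hadj1 : G.Adj u s := hCu.1 huCu (hSCu.1 hs) hus
      have hadj2 : G.Adj s w := hCw.1 (hSCw.1 hs) hwCw (fun h => hws h.symm)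
      refine ⟨SimpleGraph.Walk.cons hadj1 hadj2.toWalk, ?_⟩
      intro x hx
      simp only [SimpleGraph.Adj.toWalk, SimpleGraph.Walk.support_cons,
        SimpleGraph.Walk.support_nil, List.mem_cons, List.mem_singleton,
        List.not_mem_nil, or_false] at hx
      rcases hx with rfl | rfl | rfl
      · exact ⟨huW', huS'⟩
      · exact ⟨hsW, hsS'⟩
      · exact ⟨hwW', hwS'⟩

end Chordal
end

section
/- Let G be a connected chordal graph, π a perfect sequence of its maximal cliques, and k < K. If π' is any perfect sequence of the maximal cliques of the induced subgraph on C_{π(1)} ∪ ... ∪ C_{π(k)} (whose maximal cliques are exactly {C_{π(1)},...,C_{π(k)}}), then the concatenated sequence C_{π'(1)},...,C_{π'(k)}, C_{π(k+1)},...,C_{π(K)} is a perfect sequence of the maximal cliques of G. -/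
namespace Chordal

variable {V : Type*} [Fintype V]

/-- Every clique extends to a maximal clique (finite vertex set). -/
lemma exists_isMaxClique_superset {V : Type*} [Fintype V] (G : SimpleGraph V) {s : Set V}
    (hs : G.IsClique s) : ∃ t, IsMaxClique G t ∧ s ⊆ t := by
  classical
  obtain ⟨t, ⟨ht, hst⟩, hmax⟩ := Set.Finite.exists_maximalFor id
    {t : Set V | G.IsClique t ∧ s ⊆ t} (Set.toFinite _) ⟨s, hs, subset_rfl⟩
  exact ⟨t, ⟨ht, fun u hu htu => Set.Subset.antisymm htu (hmax ⟨hu, hst.trans htu⟩ htu)⟩, hst⟩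

/-- Descent along the running intersection property: a nonempty set contained in the
union of the first `k` cliques of a perfect sequence and in some clique of the
sequence is contained in one of the first `k` cliques. -/
lemma descent_to_prefix {V : Type*} [Fintype V] {G : SimpleGraph V} {K k : ℕ}
    {F : Fin K → Set V} (hF : IsPerfectSeq G F) {s : Set V}
    (hsW : s ⊆ {v | ∃ j : Fin K, (j : ℕ) < k ∧ v ∈ F j}) (hs : s.Nonempty) :
    ∀ n : ℕ, ∀ m : Fin K, (m : ℕ) ≤ n → s ⊆ F m →
      ∃ j : Fin K, (j : ℕ) < k ∧ s ⊆ F j := by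
  have hk0 : 0 < k := by
    obtain ⟨v, hv⟩ := hs
    obtain ⟨j, hj, -⟩ := hsW hv
    omega
  intro n
  induction n with
  | zero =>
    intro m hm hsub
    exact ⟨m, by omega, hsub⟩
  | succ n ih =>
    intro m hm hsub
    by_cases h : (m : ℕ) < k
    · exact ⟨m, h, hsub⟩
    · have h0 : 0 < (m : ℕ) := by omega
      obtain ⟨-, m', hm', hsub'⟩ := hF.2.2 m h0
      have hpre : s ⊆ prefUnion F m := by
        intro v hv
        obtain ⟨j, hj, hvj⟩ := hsW hv
        exact ⟨j, by rw [Fin.lt_def]; omega, hvj⟩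
      have hsm' : s ⊆ F m' := fun v hv => hsub' ⟨hpre hv, hsub hv⟩
      have : (m' : ℕ) ≤ n := by
        have := Fin.lt_def.mp hm'
        omega
      exact ih m' this hsm'

theorem perfectSeq_replace_prefix {V : Type*} [Fintype V]
    (G : SimpleGraph V) (hconn : G.Connected) (hch : IsChordal G)
    (K k : ℕ) (hk : k < K) (F : Fin K → Set V) (hF : IsPerfectSeq G F)
    (f : Fin k → Set V)
    (hf : IsPerfectSeqOn G {v | ∃ j : Fin K, (j : ℕ) < k ∧ v ∈ F j} f) :
    IsPerfectSeq G (fun i : Fin K => if h : (i : ℕ) < k then f ⟨i, h⟩ else F i) := by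
  classical
  set W : Set V := {v | ∃ j : Fin K, (j : ℕ) < k ∧ v ∈ F j} with hW
  set g : Fin K → Set V := fun i : Fin K => if h : (i : ℕ) < k then f ⟨i, h⟩ else F i with hg
  -- the degenerate case k = 0 contradicts hf (the empty set is a maximal clique of G(∅))
  by_cases hk0 : k = 0
  · exfalso
    subst hk0
    have hWempty : W = ∅ := by
      ext v; simp only [hW, Set.mem_setOf_eq, Set.mem_empty_iff_false, iff_false]
      rintro ⟨j, hj, -⟩; omega
    have : IsMaxCliqueOn G W ∅ := by
      refine ⟨Set.empty_subset _, by simp, fun t htW _ _ => ?_⟩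
      rw [hWempty] at htW
      exact (Set.subset_empty_iff.mp htW).symm
    obtain ⟨i, -⟩ := (hf.2.1 ∅).mp this
    exact i.elim0
  have hk0' : 0 < k := Nat.pos_of_ne_zero hk0
  -- every F j with j < k is a maximal clique of G(W)
  have key2 : ∀ j : Fin K, (j : ℕ) < k → IsMaxCliqueOn G W (F j) := by
    intro j hj
    have hmc : IsMaxClique G (F j) := (hF.2.1 (F j)).mpr ⟨j, rfl⟩
    exact ⟨fun v hv => ⟨j, hj, hv⟩, hmc.1, fun t _ ht hsub => hmc.2 t ht hsub⟩
  -- every maximal clique of G(W) is some F j with j < k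
  have key1 : ∀ s : Set V, IsMaxCliqueOn G W s → ∃ j : Fin K, (j : ℕ) < k ∧ s = F j := by
    intro s ⟨hsW, hscl, hsmax⟩
    rcases s.eq_empty_or_nonempty with hse | hsne
    · have h0 := key2 ⟨0, by omega⟩ (by simpa using hk0')
      exact ⟨⟨0, by omega⟩, by simpa using hk0',
        hsmax _ h0.1 h0.2.1 (by rw [hse]; exact Set.empty_subset _)⟩
    · obtain ⟨t, htmc, hst⟩ := exists_isMaxClique_superset G hscl
      obtain ⟨m, hm⟩ := (hF.2.1 t).mp htmc
      obtain ⟨j, hj, hsubj⟩ := descent_to_prefix hF hsW hsne (m : ℕ) m le_rfl (hm ▸ hst)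
      exact ⟨j, hj, hsmax (F j) (key2 j hj).1 (key2 j hj).2.1 hsubj⟩
  -- each f i equals some F j with j < k
  have key2' : ∀ i : Fin k, ∃ j : Fin K, (j : ℕ) < k ∧ f i = F j :=
    fun i => key1 (f i) ((hf.2.1 (f i)).mpr ⟨i, rfl⟩)
  -- each F j with j < k equals some f i
  have key3 : ∀ j : Fin K, (j : ℕ) < k → ∃ i : Fin k, f i = F j :=
    fun j hj => (hf.2.1 (F j)).mp (key2 j hj)
  -- prefix unions of g and F agree beyond position k
  have Wunion : ∀ i : Fin K, k ≤ (i : ℕ) → prefUnion g i = prefUnion F i := by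
    intro i hi
    ext v
    constructor
    · rintro ⟨j, hj, hvj⟩
      by_cases h : (j : ℕ) < k
      · simp only [hg, dif_pos h] at hvj
        obtain ⟨j', hj', hfj'⟩ := key2' ⟨(j : ℕ), h⟩
        exact ⟨j', by rw [Fin.lt_def]; omega, hfj' ▸ hvj⟩
      · simp only [hg, dif_neg h] at hvj
        exact ⟨j, hj, hvj⟩
    · rintro ⟨j, hj, hvj⟩
      by_cases h : (j : ℕ) < k
      · obtain ⟨i', hfi'⟩ := key3 j h
        refine ⟨⟨(i' : ℕ), lt_trans i'.isLt hk⟩, by rw [Fin.lt_def]; simp; omega, ?_⟩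
        simp only [hg, dif_pos i'.isLt]
        rw [Fin.eta, hfi']
        exact hvj
      · exact ⟨j, hj, by simp only [hg, dif_neg h]; exact hvj⟩
  refine ⟨?_, ?_, ?_⟩
  -- injectivity
  · intro i1 i2 heq
    simp only [hg] at heq
    by_cases h1 : (i1 : ℕ) < k <;> by_cases h2 : (i2 : ℕ) < k
    · rw [dif_pos h1, dif_pos h2] at heq
      have := hf.1 heq
      simp only [Fin.mk.injEq] at this
      exact Fin.ext this
    · rw [dif_pos h1, dif_neg h2] at heq
      obtain ⟨j, hj, hfj⟩ := key2' ⟨(i1 : ℕ), h1⟩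
      have := hF.1 (hfj ▸ heq)
      exact absurd (this ▸ hj) h2
    · rw [dif_neg h1, dif_pos h2] at heq
      obtain ⟨j, hj, hfj⟩ := key2' ⟨(i2 : ℕ), h2⟩
      have := hF.1 (hfj ▸ heq.symm)
      exact absurd (this ▸ hj) h1
    · rw [dif_neg h1, dif_neg h2] at heq
      exact hF.1 heq
  -- enumeration of maximal cliques
  · intro s
    constructor
    · intro hs
      obtain ⟨m, hm⟩ := (hF.2.1 s).mp hs
      by_cases h : (m : ℕ) < k
      · obtain ⟨i', hfi'⟩ := key3 m h
        refine ⟨⟨(i' : ℕ), lt_trans i'.isLt hk⟩, ?_⟩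
        simp only [hg, dif_pos i'.isLt]
        rw [Fin.eta, hfi', hm]
      · exact ⟨m, by simp only [hg, dif_neg h]; exact hm⟩
    · rintro ⟨i, hi⟩
      simp only [hg] at hi
      by_cases h : (i : ℕ) < k
      · rw [dif_pos h] at hi
        obtain ⟨j, hj, hfj⟩ := key2' ⟨(i : ℕ), h⟩
        exact (hF.2.1 s).mpr ⟨j, by rw [← hfj, hi]⟩
      · rw [dif_neg h] at hi
        exact (hF.2.1 s).mpr ⟨i, hi⟩
  -- running intersection property
  · intro i hi
    by_cases h : (i : ℕ) < k
    · have hpre : prefUnion g i = prefUnion f ⟨(i : ℕ), h⟩ := by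
        ext v
        constructor
        · rintro ⟨j, hj, hvj⟩
          have hjk : (j : ℕ) < k := lt_trans (Fin.lt_def.mp hj) h
          simp only [hg, dif_pos hjk] at hvj
          exact ⟨⟨(j : ℕ), hjk⟩, by rw [Fin.lt_def]; exact Fin.lt_def.mp hj, hvj⟩
        · rintro ⟨j, hj, hvj⟩
          refine ⟨⟨(j : ℕ), lt_trans j.isLt hk⟩, by rw [Fin.lt_def]; exact Fin.lt_def.mp hj, ?_⟩
          simp only [hg, dif_pos j.isLt]
          rw [Fin.eta]
          exact hvj
      have hgi : g i = f ⟨(i : ℕ), h⟩ := by simp only [hg, dif_pos h]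
      obtain ⟨hcl, k', hk', hsub⟩ := hf.2.2 ⟨(i : ℕ), h⟩ hi
      have hgk' : g ⟨(k' : ℕ), lt_trans k'.isLt hk⟩ = f k' := dif_pos k'.isLt
      refine ⟨by rw [hpre, hgi]; exact hcl, ⟨(k' : ℕ), lt_trans k'.isLt hk⟩, ?_, ?_⟩
      · rw [Fin.lt_def]; exact Fin.lt_def.mp hk'
      · rw [hgk', hpre, hgi]
        exact hsub
    · have hki : k ≤ (i : ℕ) := le_of_not_gt h
      have hgi : g i = F i := by simp only [hg, dif_neg h]
      have hpre := Wunion i hki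
      obtain ⟨hcl, m, hm, hsub⟩ := hF.2.2 i hi
      by_cases hmk : (m : ℕ) < k
      · obtain ⟨i', hfi'⟩ := key3 m hmk
        have hgi' : g ⟨(i' : ℕ), lt_trans i'.isLt hk⟩ = f i' := dif_pos i'.isLt
        refine ⟨by rw [hpre, hgi]; exact hcl,
          ⟨(i' : ℕ), lt_trans i'.isLt hk⟩, by rw [Fin.lt_def]; simp; omega, ?_⟩
        rw [hgi', hfi', hpre, hgi]
        exact hsub
      · have hgm : g m = F m := dif_neg hmk
        refine ⟨by rw [hpre, hgi]; exact hcl, m, hm, ?_⟩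
        rw [hgm, hpre, hgi]
        exact hsub

end Chordal
end

section
/- Let G be a connected chordal graph and C' ⊆ C(G) a subset of its maximal cliques with |C'| = k. There exists a clique tree T of G such that the subtree induced by C' is connected if and only if there exists a perfect sequence π of the maximal cliques of G whose first k cliques are exactly the elements of C'. -/
namespace Chordal

variable {V : Type*} [Fintype V]

/-! ### Auxiliary machinery -/

section WalkAux

variable {α : Type*}

lemma isPath_concat {T : SimpleGraph α} {u v w : α} {p : T.Walk u v} (hp : p.IsPath)
    (h : T.Adj v w) (hw : w ∉ p.support) : (p.concat h).IsPath := by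
  rw [← SimpleGraph.Walk.isPath_reverse_iff, SimpleGraph.Walk.reverse_concat,
    SimpleGraph.Walk.cons_isPath_iff]
  exact ⟨hp.reverse, by simpa [SimpleGraph.Walk.support_reverse] using hw⟩

lemma exists_exit {T : SimpleGraph α} {u v : α} (p : T.Walk u v) (M : Set α) :
    u ∈ M → v ∉ M → ∃ x y, x ∉ M ∧ y ∈ M ∧ T.Adj y x ∧ x ∈ p.support := by
  induction p with
  | nil => exact fun hu hv => absurd hu hv
  | @cons a b c h q ih =>
    intro hu hv
    by_cases hb : b ∈ M
    · obtain ⟨x, y, h1, h2, h3, h4⟩ := ih hb hv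
      exact ⟨x, y, h1, h2, h3, by simp [h4]⟩
    · exact ⟨b, a, hb, hu, h, by simp⟩

end WalkAux

section ChainList

variable {α : Type*}

/-- Every entry of the list after the first is adjacent to some earlier entry. -/
def ChainProp (T : SimpleGraph α) (L : List α) : Prop :=
  ∀ j : ℕ, (hj : j < L.length) → 0 < j →
    ∃ i, ∃ (hi : i < L.length), i < j ∧ T.Adj (L[i]'hi) (L[j]'hj)

lemma ChainProp.concat {T : SimpleGraph α} {L : List α} (hL : ChainProp T L)
    {x y : α} (hy : y ∈ L) (hxy : T.Adj y x) (hLne : L ≠ []) : ChainProp T (L ++ [x]) := by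
  intro j hj hj0
  have hlen : (L ++ [x]).length = L.length + 1 := by simp
  rcases lt_or_ge j L.length with hjL | hjL
  · obtain ⟨i, hi, hij, hadj⟩ := hL j hjL hj0
    refine ⟨i, by simp; omega, hij, ?_⟩
    rwa [List.getElem_append_left, List.getElem_append_left]
  · have hjeq : j = L.length := by simp at hj; omega
    subst hjeq
    obtain ⟨i, hi, hiy⟩ := List.mem_iff_getElem.mp hy
    refine ⟨i, by simp; omega, by omega, ?_⟩
    have e2 : (L ++ [x])[L.length]'hj = x := by
      rw [List.getElem_append_right (le_refl L.length)]
      simp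
    rw [e2, List.getElem_append_left, hiy]
    exact hxy
    exact hi

lemma chain_walk {T : SimpleGraph α} {L : List α} (hL : ChainProp T L) :
    ∀ n a b, (ha : a < L.length) → (hb : b < L.length) → a ≤ n → b ≤ n →
      ∃ w : T.Walk (L[a]'ha) (L[b]'hb),
        ∀ z ∈ w.support, ∃ m, ∃ (hm : m < L.length), m ≤ n ∧ L[m]'hm = z := by
  intro n
  induction n using Nat.strong_induction_on with
  | _ n ih =>
    intro a b ha hb han hbn
    have core : ∀ (a b : ℕ) (ha : a < L.length) (hb : b < L.length), a < b → b = n →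
        ∃ w : T.Walk (L[a]'ha) (L[b]'hb),
          ∀ z ∈ w.support, ∃ m, ∃ (hm : m < L.length), m ≤ n ∧ L[m]'hm = z := by
      intro a b ha hb hab hbn
      obtain ⟨i, hi, hib, hadj⟩ := hL b hb (by omega)
      obtain ⟨w, hw⟩ := ih (b - 1) (by omega) a i ha hi (by omega) (by omega)
      refine ⟨w.concat hadj, ?_⟩
      intro z hz
      rw [SimpleGraph.Walk.support_concat, List.mem_append] at hz
      rcases hz with hz | hz
      · obtain ⟨m, hm, hmn, hmz⟩ := hw z hz
        exact ⟨m, hm, by omega, hmz⟩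
      · simp at hz
        exact ⟨b, hb, by omega, hz.symm⟩
    rcases Nat.lt_trichotomy a b with hab | hab | hab
    · rcases eq_or_lt_of_le hbn with hbe | hbl
      · exact core a b ha hb hab hbe
      · obtain ⟨w, hw⟩ := ih b hbl a b ha hb (le_of_lt hab) le_rfl
        exact ⟨w, fun z hz => by
          obtain ⟨m, hm, hmn, hmz⟩ := hw z hz; exact ⟨m, hm, by omega, hmz⟩⟩
    · subst hab
      refine ⟨SimpleGraph.Walk.nil, ?_⟩
      intro z hz
      rw [SimpleGraph.Walk.support_nil, List.mem_singleton] at hz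
      exact ⟨a, ha, han, hz.symm⟩
    · rcases eq_or_lt_of_le han with hae | hal
      · obtain ⟨w, hw⟩ := core b a hb ha hab hae
        refine ⟨w.reverse, ?_⟩
        intro z hz
        rw [SimpleGraph.Walk.support_reverse, List.mem_reverse] at hz
        exact hw z hz
      · obtain ⟨w, hw⟩ := ih a hal a b ha hb le_rfl (le_of_lt hab)
        exact ⟨w, fun z hz => by
          obtain ⟨m, hm, hmn, hmz⟩ := hw z hz; exact ⟨m, hm, by omega, hmz⟩⟩

lemma build_phase1 [DecidableEq α] {T : SimpleGraph α} (A : Finset α)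
    (hAconn : ∀ u ∈ A, ∀ v ∈ A, ∃ w : T.Walk u v, ∀ x ∈ w.support, x ∈ (A : Set α)) :
    ∀ n, 0 < n → n ≤ A.card →
      ∃ L : List α, L.Nodup ∧ ChainProp T L ∧ L.toFinset ⊆ A ∧ L.length = n := by
  intro n
  induction n with
  | zero => omega
  | succ n ihn =>
    intro _ hcard
    rcases Nat.eq_zero_or_pos n with hn0 | hn0
    · subst hn0
      have hApos : 0 < A.card := by omega
      obtain ⟨a, ha⟩ := Finset.card_pos.mp hApos
      refine ⟨[a], by simp, ?_, by simpa, by simp⟩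
      intro j hj hj0; simp at hj; omega
    · obtain ⟨L, hnd, hch, hsub, hlen⟩ := ihn hn0 (by omega)
      have hLne : L ≠ [] := by
        intro h; rw [h] at hlen; simp at hlen; omega
      have hcardL : L.toFinset.card = n := by
        rw [List.toFinset_card_of_nodup hnd, hlen]
      have hex : ∃ v ∈ A, v ∉ L.toFinset := by
        by_contra h
        push_neg at h
        have : A ⊆ L.toFinset := h
        have := Finset.card_le_card this
        omega
      obtain ⟨v, hvA, hvL⟩ := hex
      have huL : L.head hLne ∈ L := List.head_mem hLne
      have huA : L.head hLne ∈ A := hsub (List.mem_toFinset.mpr huL)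
      obtain ⟨w, hwA⟩ := hAconn _ huA _ hvA
      obtain ⟨x, y, hx, hy, hadj, hxw⟩ := exists_exit w {z | z ∈ L}
        (by exact huL) (by simpa using fun h => hvL (List.mem_toFinset.mpr h))
      refine ⟨L ++ [x], ?_, hch.concat hy hadj hLne, ?_, by simp [hlen]⟩
      · simp [List.nodup_append, hnd]
        exact fun a ha hax => hx (hax ▸ ha)
      · intro z hz
        simp at hz
        rcases hz.symm with hz | hz
        · exact hsub (List.mem_toFinset.mpr hz)
        · have hzx : z = x := hz
          rw [hzx]; exact hwA x hxw

lemma build_phase2 [Fintype α] [DecidableEq α] {T : SimpleGraph α} (hT : T.Connected) :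
    ∀ m (L : List α), L.Nodup → ChainProp T L → L ≠ [] →
      L.length + m = Fintype.card α →
      ∃ L' : List α, L'.Nodup ∧ ChainProp T L' ∧
        L'.take L.length = L ∧ L'.length = Fintype.card α := by
  intro m
  induction m with
  | zero =>
    intro L hnd hch hne hlen
    exact ⟨L, hnd, hch, List.take_length .., by omega⟩
  | succ m ihm =>
    intro L hnd hch hne hlen
    have hcardL : L.toFinset.card = L.length := List.toFinset_card_of_nodup hnd
    have hex : ∃ v, v ∉ L.toFinset := by
      by_contra h
      push_neg at h
      have : (Finset.univ : Finset α) ⊆ L.toFinset := fun z _ => h z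
      have := Finset.card_le_card this
      simp [hcardL] at this
      omega
    obtain ⟨v, hvL⟩ := hex
    have huL : L.head hne ∈ L := List.head_mem hne
    obtain ⟨w⟩ := hT.preconnected (L.head hne) v
    obtain ⟨x, y, hx, hy, hadj, hxw⟩ := exists_exit w {z | z ∈ L}
      (by exact huL) (by simpa using fun h => hvL (List.mem_toFinset.mpr h))
    obtain ⟨L', hnd', hch', htake, hlen'⟩ := ihm (L ++ [x])
      (by simp [List.nodup_append, hnd]; exact fun a ha hax => hx (hax ▸ ha))
      (hch.concat hy hadj hne) (by simp) (by simp; omega)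
    refine ⟨L', hnd', hch', ?_, hlen'⟩
    have : L'.take (L.length + 1) = L ++ [x] := by simpa using htake
    have h2 : (L'.take (L.length + 1)).take L.length = L := by
      rw [this, List.take_left]
    rwa [List.take_take, min_eq_left (by omega)] at h2

lemma exists_enum [Fintype α] [DecidableEq α] {T : SimpleGraph α} (hT : T.Connected)
    (A : Finset α) (hA : A.Nonempty)
    (hAconn : ∀ u ∈ A, ∀ v ∈ A, ∃ w : T.Walk u v, ∀ x ∈ w.support, x ∈ (A : Set α)) :
    ∃ L : List α, L.Nodup ∧ ChainProp T L ∧ L.length = Fintype.card α ∧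
      (L.take A.card).toFinset = A := by
  obtain ⟨L₁, hnd₁, hch₁, hsub₁, hlen₁⟩ :=
    build_phase1 A hAconn A.card (Finset.card_pos.mpr hA) le_rfl
  have hfin₁ : L₁.toFinset = A :=
    Finset.eq_of_subset_of_card_le hsub₁
      (by rw [List.toFinset_card_of_nodup hnd₁, hlen₁])
  have hne₁ : L₁ ≠ [] := by
    intro h; rw [h] at hlen₁; simp at hlen₁
    have := Finset.card_pos.mpr hA; omega
  have hle : A.card ≤ Fintype.card α := Finset.card_le_univ A
  obtain ⟨L, hnd, hch, htake, hlen⟩ := build_phase2 hT (Fintype.card α - A.card) L₁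
    hnd₁ hch₁ hne₁ (by omega)
  refine ⟨L, hnd, hch, hlen, ?_⟩
  rw [hlen₁] at htake
  rw [htake, hfin₁]

end ChainList
section ParGraph

variable {V : Type*} {K : ℕ} (par : Fin K → Fin K)

/-- The tree on `Fin K` generated by a parent function. -/
def parGraph : SimpleGraph (Fin K) where
  Adj i j := i ≠ j ∧ (par i = j ∨ par j = i)
  symm := ⟨fun i j ⟨h, h2⟩ => ⟨h.symm, h2.symm⟩⟩
  loopless := ⟨fun i ⟨h, _⟩ => h rfl⟩

variable {par}

lemma par_adj_lt (h0 : ∀ j : Fin K, (j : ℕ) = 0 → par j = j)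
    (hlt : ∀ j : Fin K, 0 < (j : ℕ) → par j < j)
    {i j : Fin K} (h : i ≠ j) (hp : par j = i) : i < j := by
  rcases Nat.eq_zero_or_pos (j : ℕ) with hz | hz
  · exact absurd ((h0 j hz) ▸ hp).symm h
  · exact hp ▸ hlt j hz

lemma par_asc (h0 : ∀ j : Fin K, (j : ℕ) = 0 → par j = j)
    (hlt : ∀ j : Fin K, 0 < (j : ℕ) → par j < j)
    {m b : Fin K} (q : (parGraph par).Walk m b) :
    q.IsPath → par m ∉ q.support.tail → ∀ x ∈ q.support, m ≤ x ∧ x ≤ b := by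
  induction q with
  | nil =>
    intro _ _ x hx
    rw [SimpleGraph.Walk.support_nil, List.mem_singleton] at hx
    subst hx; exact ⟨le_refl _, le_refl _⟩
  | @cons u v w e q ih =>
    intro hq hpar
    rw [SimpleGraph.Walk.cons_isPath_iff] at hq
    obtain ⟨hq', hu⟩ := hq
    rw [SimpleGraph.Walk.support_cons, List.tail_cons] at hpar
    have hpv : par v = u := by
      rcases e.2 with h | h
      · exact absurd (h ▸ q.start_mem_support) hpar
      · exact h
    have huv : u < v := par_adj_lt h0 hlt e.1 hpv
    have hih := ih hq' (by rw [hpv]; exact fun hc => hu (List.mem_of_mem_tail hc))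
    intro x hx
    rw [SimpleGraph.Walk.support_cons, List.mem_cons] at hx
    rcases hx with rfl | hx
    · exact ⟨le_refl _, le_of_lt (lt_of_lt_of_le huv (hih v q.start_mem_support).2)⟩
    · exact ⟨le_of_lt (lt_of_lt_of_le huv (hih x hx).1), (hih x hx).2⟩

lemma par_desc (h0 : ∀ j : Fin K, (j : ℕ) = 0 → par j = j)
    (hlt : ∀ j : Fin K, 0 < (j : ℕ) → par j < j)
    {a b : Fin K} (p : (parGraph par).Walk a b) :
    p.IsPath → ∀ x ∈ p.support, x ≤ a ⊔ b := by
  induction p with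
  | nil =>
    intro _ x hx
    rw [SimpleGraph.Walk.support_nil, List.mem_singleton] at hx
    subst hx; exact le_sup_left
  | @cons a m b e q ih =>
    intro hp x hx
    rw [SimpleGraph.Walk.cons_isPath_iff] at hp
    rw [SimpleGraph.Walk.support_cons, List.mem_cons] at hx
    rcases e.2 with h | h
    · -- par a = m, so m < a
      have hma : m < a := par_adj_lt h0 hlt (Ne.symm e.1) h
      rcases hx with rfl | hx
      · exact le_sup_left
      · exact le_trans (ih hp.1 x hx) (sup_le_sup_right (le_of_lt hma) b)
    · -- par m = a, so a < m: ascending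
      have ham : a < m := par_adj_lt h0 hlt e.1 h
      rcases hx with rfl | hx
      · exact le_sup_left
      · have := par_asc h0 hlt q hp.1
          (by rw [h]; exact fun hc => hp.2 (List.mem_of_mem_tail hc)) x hx
        exact le_trans this.2 le_sup_right

lemma par_path_unique (h0 : ∀ j : Fin K, (j : ℕ) = 0 → par j = j)
    (hlt : ∀ j : Fin K, 0 < (j : ℕ) → par j < j) :
    ∀ n : ℕ, ∀ a b : Fin K, (a : ℕ) ≤ n → (b : ℕ) ≤ n →
      ∀ p q : (parGraph par).Walk a b, p.IsPath → q.IsPath → p = q := by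
  intro n
  induction n using Nat.strong_induction_on with
  | _ n ih =>
    have core : ∀ a b : Fin K, (a : ℕ) ≤ n → b < a →
        ∀ p q : (parGraph par).Walk a b, p.IsPath → q.IsPath → p = q := by
      intro a b han hba p q hp hq
      have hne : a ≠ b := (ne_of_lt hba).symm
      obtain ⟨m, e, p', rfl⟩ := SimpleGraph.Walk.exists_eq_cons_of_ne hne p
      obtain ⟨m2, e2, q', rfl⟩ := SimpleGraph.Walk.exists_eq_cons_of_ne hne q
      have hsup : a ⊔ b = a := sup_eq_left.mpr (le_of_lt hba)
      have hm : m = par a := by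
        have hmem : m ∈ (SimpleGraph.Walk.cons e p').support := by
          rw [SimpleGraph.Walk.support_cons]
          exact List.mem_cons_of_mem _ p'.start_mem_support
        have hle : m ≤ a := by
          have := par_desc h0 hlt _ hp m hmem
          rwa [hsup] at this
        rcases e.2 with h | h
        · exact h.symm
        · exact absurd (par_adj_lt h0 hlt e.1 h) (not_lt.mpr hle)
      have hm2 : m2 = par a := by
        have hmem : m2 ∈ (SimpleGraph.Walk.cons e2 q').support := by
          rw [SimpleGraph.Walk.support_cons]
          exact List.mem_cons_of_mem _ q'.start_mem_support
        have hle : m2 ≤ a := by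
          have := par_desc h0 hlt _ hq m2 hmem
          rwa [hsup] at this
        rcases e2.2 with h | h
        · exact h.symm
        · exact absurd (par_adj_lt h0 hlt e2.1 h) (not_lt.mpr hle)
      subst hm
      subst hm2
      rw [SimpleGraph.Walk.cons_isPath_iff] at hp hq
      have hpa : 0 < (a : ℕ) := lt_of_le_of_lt (Nat.zero_le _) hba
      have hpar_lt : (par a : ℕ) < (a : ℕ) := hlt a hpa
      have heq : p' = q' := by
        refine ih (max (par a : ℕ) (b : ℕ)) (by omega) (par a) b (le_max_left _ _)
          (le_max_right _ _) p' q' hp.1 hq.1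
      rw [heq]
    intro a b han hbn p q hp hq
    rcases Nat.lt_trichotomy (b : ℕ) (a : ℕ) with hba | hab | hab
    · exact core a b han (by exact hba) p q hp hq
    · have : a = b := Fin.ext hab.symm
      subst this
      rw [(SimpleGraph.Walk.isPath_iff_eq_nil (p := p)).mp hp,
        (SimpleGraph.Walk.isPath_iff_eq_nil (p := q)).mp hq]
    · have := core b a hbn (by exact hab) p.reverse q.reverse hp.reverse hq.reverse
      have h2 := congrArg SimpleGraph.Walk.reverse this
      rwa [SimpleGraph.Walk.reverse_reverse, SimpleGraph.Walk.reverse_reverse] at h2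

lemma par_junction (h0 : ∀ j : Fin K, (j : ℕ) = 0 → par j = j)
    (hlt : ∀ j : Fin K, 0 < (j : ℕ) → par j < j)
    (f : Fin K → Set V)
    (hRIP : ∀ j : Fin K, 0 < (j : ℕ) → prefUnion f j ∩ f j ⊆ f (par j)) :
    ∀ n : ℕ, ∀ a b : Fin K, (a : ℕ) ≤ n → (b : ℕ) ≤ n →
      ∀ p : (parGraph par).Walk a b, p.IsPath → ∀ x ∈ p.support, f a ∩ f b ⊆ f x := by
  intro n
  induction n using Nat.strong_induction_on with
  | _ n ih =>
    have core : ∀ a b : Fin K, (a : ℕ) ≤ n → b < a →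
        ∀ p : (parGraph par).Walk a b, p.IsPath → ∀ x ∈ p.support, f a ∩ f b ⊆ f x := by
      intro a b han hba p hp
      have hne : a ≠ b := (ne_of_lt hba).symm
      obtain ⟨m, e, p', rfl⟩ := SimpleGraph.Walk.exists_eq_cons_of_ne hne p
      have hsup : a ⊔ b = a := sup_eq_left.mpr (le_of_lt hba)
      have hm : m = par a := by
        have hmem : m ∈ (SimpleGraph.Walk.cons e p').support := by
          rw [SimpleGraph.Walk.support_cons]
          exact List.mem_cons_of_mem _ p'.start_mem_support
        have hle : m ≤ a := by
          have := par_desc h0 hlt _ hp m hmem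
          rwa [hsup] at this
        rcases e.2 with h | h
        · exact h.symm
        · exact absurd (par_adj_lt h0 hlt e.1 h) (not_lt.mpr hle)
      subst hm
      have hpa : 0 < (a : ℕ) := lt_of_le_of_lt (Nat.zero_le _) hba
      have hstep : f a ∩ f b ⊆ f (par a) := by
        intro v hv
        exact hRIP a hpa ⟨⟨b, hba, hv.2⟩, hv.1⟩
      rw [SimpleGraph.Walk.cons_isPath_iff] at hp
      intro x hx
      rw [SimpleGraph.Walk.support_cons, List.mem_cons] at hx
      rcases hx with rfl | hx
      · exact Set.inter_subset_left
      · have hpar_lt : (par a : ℕ) < (a : ℕ) := hlt a hpa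
        have hih := ih (max (par a : ℕ) (b : ℕ)) (by omega) (par a) b
          (le_max_left _ _) (le_max_right _ _) p' hp.1 x hx
        intro v hv
        exact hih ⟨hstep hv, hv.2⟩
    intro a b han hbn p hp x hx
    rcases Nat.lt_trichotomy (b : ℕ) (a : ℕ) with hba | hab | hab
    · exact core a b han (by exact hba) p hp x hx
    · have : a = b := Fin.ext hab.symm
      subst this
      rw [(SimpleGraph.Walk.isPath_iff_eq_nil (p := p)).mp hp] at hx
      rw [SimpleGraph.Walk.support_nil, List.mem_singleton] at hx
      subst hx
      exact Set.inter_subset_left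
    · have hx' : x ∈ p.reverse.support := by
        rw [SimpleGraph.Walk.support_reverse, List.mem_reverse]; exact hx
      have := core b a hbn (by exact hab) p.reverse hp.reverse x hx'
      rw [Set.inter_comm] at this
      exact this

lemma par_walkToRoot [NeZero K] (h0 : ∀ j : Fin K, (j : ℕ) = 0 → par j = j)
    (hlt : ∀ j : Fin K, 0 < (j : ℕ) → par j < j) :
    ∀ n : ℕ, ∀ j : Fin K, (j : ℕ) ≤ n →
      ∃ w : (parGraph par).Walk j 0, ∀ x ∈ w.support, x ≤ j := by
  intro n
  induction n with
  | zero =>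
    intro j hj
    have : j = 0 := by
      apply Fin.ext
      show (j : ℕ) = 0
      omega
    subst this
    refine ⟨SimpleGraph.Walk.nil, ?_⟩
    intro x hx
    rw [SimpleGraph.Walk.support_nil, List.mem_singleton] at hx
    exact hx.le
  | succ n ihn =>
    intro j hj
    rcases Nat.eq_zero_or_pos (j : ℕ) with hz | hz
    · have : j = 0 := by
        apply Fin.ext
        show (j : ℕ) = 0
        omega
      subst this
      refine ⟨SimpleGraph.Walk.nil, ?_⟩
      intro x hx
      rw [SimpleGraph.Walk.support_nil, List.mem_singleton] at hx
      exact hx.le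
    · have hplt : par j < j := hlt j hz
      have e : (parGraph par).Adj j (par j) := ⟨(ne_of_lt hplt).symm, Or.inl rfl⟩
      obtain ⟨w, hw⟩ := ihn (par j) (by omega)
      refine ⟨SimpleGraph.Walk.cons e w, ?_⟩
      intro x hx
      rw [SimpleGraph.Walk.support_cons, List.mem_cons] at hx
      rcases hx with rfl | hx
      · exact le_refl _
      · exact le_of_lt (lt_of_le_of_lt (hw x hx) hplt)

end ParGraph
theorem connected_subtree_iff_prefix_of_perfectSeq {V : Type*} [Fintype V]
    (G : SimpleGraph V) (hconn : G.Connected) (hch : IsChordal G)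
    (k : ℕ) (𝒞 : Set (Set V)) (h𝒞 : ∀ s ∈ 𝒞, IsMaxClique G s)
    (hcard : 𝒞.ncard = k) (hne : 𝒞.Nonempty) :
    (∃ T : SimpleGraph {s : Set V // IsMaxClique G s},
      IsCliqueTree G T ∧ ConnOn T {D : {s : Set V // IsMaxClique G s} | D.val ∈ 𝒞}) ↔
    (∃ (K : ℕ) (f : Fin K → Set V), IsPerfectSeq G f ∧
      {s : Set V | ∃ j : Fin K, (j : ℕ) < k ∧ f j = s} = 𝒞) := by
  classical
  constructor
  · rintro ⟨T, ⟨hTtree, hTjun⟩, hTne, hTconn⟩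
    set A : Finset {s : Set V // IsMaxClique G s} :=
      Finset.univ.filter (fun D => D.val ∈ 𝒞) with hA
    have hmemA : ∀ D : {s : Set V // IsMaxClique G s}, D ∈ A ↔ D.val ∈ 𝒞 := by
      intro D; simp [hA]
    have hAne : A.Nonempty := by
      obtain ⟨s, hs⟩ := hne
      exact ⟨⟨s, h𝒞 s hs⟩, (hmemA _).mpr hs⟩
    have hAconn : ∀ u ∈ A, ∀ v ∈ A, ∃ w : T.Walk u v, ∀ x ∈ w.support, x ∈ (A : Set {s : Set V // IsMaxClique G s}) := by
      intro u hu v hv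
      obtain ⟨w, hw⟩ := hTconn u ((hmemA u).mp hu) v ((hmemA v).mp hv)
      exact ⟨w, fun x hx => Finset.mem_coe.mpr ((hmemA x).mpr (hw x hx))⟩
    obtain ⟨L, hnd, hchain, hlenL, htakeA⟩ := exists_enum hTtree.isConnected A hAne hAconn
    have hgetinj := List.nodup_iff_injective_get.mp hnd
    -- cardinality of A is k
    have hAcard : A.card = k := by
      have h2 : Subtype.val '' {D : {s : Set V // IsMaxClique G s} | D.val ∈ 𝒞} = 𝒞 := by
        ext s
        constructor
        · rintro ⟨D, hD, rfl⟩; exact hD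
        · intro hs; exact ⟨⟨s, h𝒞 s hs⟩, hs, rfl⟩
      have h1 : (↑A : Set {s : Set V // IsMaxClique G s}) = {D | D.val ∈ 𝒞} := by
        ext D; simp [hA]
      rw [← Set.ncard_coe_finset A, h1,
        ← Set.ncard_image_of_injective {D : {s : Set V // IsMaxClique G s} | D.val ∈ 𝒞} Subtype.val_injective, h2, hcard]
    have hkK : k ≤ L.length := by
      rw [hlenL, ← hAcard]; exact Finset.card_le_univ A
    refine ⟨L.length, fun j => (L.get j).val, ⟨?_, ?_, ?_⟩, ?_⟩
    · -- injective
      intro j1 j2 h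
      exact hgetinj (Subtype.ext h)
    · -- enumerates all maximal cliques
      intro s
      constructor
      · intro hs
        have hall : (⟨s, hs⟩ : {s : Set V // IsMaxClique G s}) ∈ L := by
          have huniv : L.toFinset = Finset.univ := by
            apply Finset.eq_univ_of_card
            rw [List.toFinset_card_of_nodup hnd, hlenL]
          have : (⟨s, hs⟩ : {s : Set V // IsMaxClique G s}) ∈ L.toFinset := by rw [huniv]; exact Finset.mem_univ _
          exact List.mem_toFinset.mp this
        obtain ⟨n, hn⟩ := List.mem_iff_get.mp hall
        exact ⟨n, congrArg Subtype.val hn⟩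
      · rintro ⟨j, rfl⟩
        exact (L.get j).prop
    · -- running intersection property
      intro j hj0
      obtain ⟨i, hi, hij, hadj⟩ := hchain (j : ℕ) j.isLt hj0
      have key : ∀ j' : Fin L.length, (j' : ℕ) < (j : ℕ) →
          (L.get j').val ∩ (L.get j).val ⊆ (L.get ⟨i, hi⟩).val := by
        intro j' hj'
        obtain ⟨w, hw⟩ := chain_walk hchain ((j : ℕ) - 1) (j' : ℕ) i j'.isLt hi
          (by omega) (by omega)
        have hqp : w.bypass.IsPath := w.bypass_isPath
        have hnotin : L.get j ∉ w.bypass.support := by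
          intro hc
          obtain ⟨m, hm, hmn, hmz⟩ := hw _ (w.support_bypass_subset hc)
          have : (⟨m, hm⟩ : Fin L.length) = j := hgetinj hmz
          have : m = (j : ℕ) := congrArg Fin.val this
          omega
        have hp : (w.bypass.concat hadj).IsPath := isPath_concat hqp hadj hnotin
        have hmem : L.get ⟨i, hi⟩ ∈ (w.bypass.concat hadj).support := by
          rw [SimpleGraph.Walk.support_concat, List.mem_append]
          exact Or.inl w.bypass.end_mem_support
        exact hTjun _ _ (w.bypass.concat hadj) hp _ hmem
      constructor
      · exact ((L.get j).prop.1).subset Set.inter_subset_right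
      · refine ⟨⟨i, hi⟩, hij, ?_⟩
        rintro v ⟨⟨j', hj', hv1⟩, hv2⟩
        exact key j' hj' ⟨hv1, hv2⟩
    · -- the prefix is 𝒞
      ext s
      constructor
      · rintro ⟨j, hjk, rfl⟩
        have hmem : L.get j ∈ L.take A.card := by
          rw [List.mem_iff_getElem]
          refine ⟨(j : ℕ), ?_, ?_⟩
          · rw [List.length_take]; omega
          · rw [List.getElem_take]
            exact (List.get_eq_getElem (l := L) (i := j)).symm
        have : L.get j ∈ A := by rw [← htakeA]; exact List.mem_toFinset.mpr hmem
        exact (hmemA _).mp this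
      · intro hs
        have hx : (⟨s, h𝒞 s hs⟩ : {s : Set V // IsMaxClique G s}) ∈ L.take A.card := by
          apply List.mem_toFinset.mp
          rw [htakeA]
          exact (hmemA _).mpr hs
        obtain ⟨m, hm, hmz⟩ := List.mem_iff_getElem.mp hx
        rw [List.length_take] at hm
        have hmL : m < L.length := by omega
        have hmk : m < k := by omega
        refine ⟨⟨m, hmL⟩, by simpa using hmk, ?_⟩
        have : L[m]'hmL = ⟨s, h𝒞 s hs⟩ := by rw [← hmz, List.getElem_take]
        exact congrArg Subtype.val this
  · rintro ⟨K, f, ⟨hfinj, hfenum, hfRIP⟩, hpre⟩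
    obtain ⟨s0, hs0⟩ := hne
    have hs0' : s0 ∈ {s : Set V | ∃ j : Fin K, (j : ℕ) < k ∧ f j = s} := by
      rw [hpre]; exact hs0
    obtain ⟨j0, hj0k, hj0⟩ := hs0'
    haveI : NeZero K := ⟨Nat.pos_iff_ne_zero.mp j0.pos⟩
    set par : Fin K → Fin K :=
      fun j => if h : 0 < (j : ℕ) then Classical.choose (hfRIP j h).2 else j with hpar_def
    have h0 : ∀ j : Fin K, (j : ℕ) = 0 → par j = j := by
      intro j hj
      rw [hpar_def]
      exact dif_neg (by omega)
    have hlt : ∀ j : Fin K, 0 < (j : ℕ) → par j < j := by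
      intro j hj
      rw [hpar_def]
      simp only [dif_pos hj]
      exact (Classical.choose_spec (hfRIP j hj).2).1
    have hRIP : ∀ j : Fin K, 0 < (j : ℕ) → prefUnion f j ∩ f j ⊆ f (par j) := by
      intro j hj
      rw [hpar_def]
      simp only [dif_pos hj]
      exact (Classical.choose_spec (hfRIP j hj).2).2
    set e : Fin K → {s : Set V // IsMaxClique G s} :=
      fun j => ⟨f j, (hfenum (f j)).mpr ⟨j, rfl⟩⟩ with he_def
    have hebij : Function.Bijective e := by
      constructor
      · intro a b h
        exact hfinj (congrArg Subtype.val h)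
      · intro D
        obtain ⟨j, hj⟩ := (hfenum D.val).mp D.prop
        exact ⟨j, Subtype.ext hj⟩
    set eqv : Fin K ≃ {s : Set V // IsMaxClique G s} := Equiv.ofBijective e hebij with heqv
    set T : SimpleGraph {s : Set V // IsMaxClique G s} :=
      { Adj := fun C D => (parGraph par).Adj (eqv.symm C) (eqv.symm D),
        symm := ⟨fun C D h => (parGraph par).adj_symm h⟩,
          loopless := ⟨fun C h => (parGraph par).loopless.irrefl _ h⟩ } with hT_def
    have h2inj : Function.Injective (fun C => eqv.symm C) := eqv.symm.injective
    set h1 : parGraph par →g T :=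
      { toFun := fun j => eqv j,
        map_rel' := by
          intro i j h
          show (parGraph par).Adj (eqv.symm (eqv i)) (eqv.symm (eqv j))
          rwa [Equiv.symm_apply_apply, Equiv.symm_apply_apply] } with hh1
    set h2 : T →g parGraph par :=
      { toFun := fun C => eqv.symm C,
        map_rel' := fun h => h } with hh2
    have hval : ∀ C : {s : Set V // IsMaxClique G s}, f (eqv.symm C) = C.val := by
      intro C
      have := eqv.apply_symm_apply C
      exact congrArg Subtype.val this
    have hsymme : ∀ j : Fin K, eqv.symm (eqv j) = j := fun j => eqv.symm_apply_apply j
    -- connectivity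
    have hTconn : T.Connected := by
      rw [SimpleGraph.connected_iff]
      refine ⟨?_, ⟨e 0⟩⟩
      intro C D
      obtain ⟨w1, _⟩ := par_walkToRoot h0 hlt K (eqv.symm C) (le_of_lt (Fin.is_lt _))
      obtain ⟨w2, _⟩ := par_walkToRoot h0 hlt K (eqv.symm D) (le_of_lt (Fin.is_lt _))
      exact ⟨((w1.append w2.reverse).map h1).copy
        (eqv.apply_symm_apply C) (eqv.apply_symm_apply D)⟩
    have hTacyc : T.IsAcyclic := by
      apply SimpleGraph.isAcyclic_of_path_unique
      intro C D p q
      have hp' : (p.val.map h2).IsPath :=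
        SimpleGraph.Walk.map_isPath_of_injective h2inj p.prop
      have hq' : (q.val.map h2).IsPath :=
        SimpleGraph.Walk.map_isPath_of_injective h2inj q.prop
      have := par_path_unique h0 hlt K (eqv.symm C) (eqv.symm D)
        (le_of_lt (Fin.is_lt _)) (le_of_lt (Fin.is_lt _)) (p.val.map h2) (q.val.map h2) hp' hq'
      have := SimpleGraph.Walk.map_injective_of_injective h2inj C D this
      exact Subtype.ext this
    refine ⟨T, ⟨⟨hTconn, hTacyc⟩, ?_⟩, ?_, ?_⟩
    · -- junction property
      intro C₁ C₂ p hp C₃ hC₃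
      have hp' : (p.map h2).IsPath := SimpleGraph.Walk.map_isPath_of_injective h2inj hp
      have hm : eqv.symm C₃ ∈ (p.map h2).support := by
        rw [SimpleGraph.Walk.support_map]
        exact List.mem_map_of_mem hC₃
      have := par_junction h0 hlt f hRIP K (eqv.symm C₁) (eqv.symm C₂)
        (le_of_lt (Fin.is_lt _)) (le_of_lt (Fin.is_lt _)) (p.map h2) hp' _ hm
      rwa [hval, hval, hval] at this
    · -- nonempty
      refine ⟨e j0, ?_⟩
      show (e j0).val ∈ 𝒞
      show f j0 ∈ 𝒞
      rw [hj0]; exact hs0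
    · -- connectivity of the prefix
      intro u hu v hv
      have hu' : u.val ∈ {s : Set V | ∃ j : Fin K, (j : ℕ) < k ∧ f j = s} := by
        rw [hpre]; exact hu
      have hv' : v.val ∈ {s : Set V | ∃ j : Fin K, (j : ℕ) < k ∧ f j = s} := by
        rw [hpre]; exact hv
      obtain ⟨ju, hjuk, hju⟩ := hu'
      obtain ⟨jv, hjvk, hjv⟩ := hv'
      have hju' : eqv.symm u = ju := hfinj (by rw [hval]; exact hju.symm)
      have hjv' : eqv.symm v = jv := hfinj (by rw [hval]; exact hjv.symm)
      obtain ⟨w1, hw1⟩ := par_walkToRoot h0 hlt K (eqv.symm u) (le_of_lt (Fin.is_lt _))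
      obtain ⟨w2, hw2⟩ := par_walkToRoot h0 hlt K (eqv.symm v) (le_of_lt (Fin.is_lt _))
      refine ⟨((w1.append w2.reverse).map h1).copy
        (eqv.apply_symm_apply u) (eqv.apply_symm_apply v), ?_⟩
      intro x hx
      rw [SimpleGraph.Walk.support_copy, SimpleGraph.Walk.support_map] at hx
      obtain ⟨y, hy, rfl⟩ := List.mem_map.mp hx
      have hyk : (y : ℕ) < k := by
        rw [SimpleGraph.Walk.mem_support_append_iff] at hy
        rcases hy with hy | hy
        · have := hw1 y hy
          rw [hju'] at this
          have hle : (y : ℕ) ≤ (ju : ℕ) := this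
          omega
        · rw [SimpleGraph.Walk.support_reverse, List.mem_reverse] at hy
          have := hw2 y hy
          rw [hjv'] at this
          have hle : (y : ℕ) ≤ (jv : ℕ) := this
          omega
      show (h1 y).val ∈ 𝒞
      have : (h1 y).val = f y := rfl
      rw [this, ← hpre]
      exact ⟨y, hyk, rfl⟩

end Chordal
end
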